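/- arXiv:1312.2163 — 12 statements merged into one kernel-verified Lean document; each statement's English description precedes it below -/
import Mathlib

section
/- For positive integers n and r with r dividing n, each equivalence class of S_n under ≡_r has exactly (r!)^{n/r} elements. -/
/-- The `r`-regular multipermutation associated with a permutation `π` of `Fin n`:
`mp n r π j` is the (0-indexed) rank block of element `j`, i.e. `⌊π⁻¹(j)/r⌋`. -/
def mp (n r : ℕ) (π : Equiv.Perm (Fin n)) (j : Fin n) : ℕ := (π.symm j : ℕ) / r

/-- The `i`-th part of the ordered set partition associated with `π`:
the set of elements of rank block `i`. -/
def part (n r : ℕ) (π : Equiv.Perm (Fin n)) (i : ℕ) : Finset (Fin n) :=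
  Finset.univ.filter fun j => mp n r π j = i

/-- The `r`-regular Hamming distance between permutations. -/
def hammR (n r : ℕ) (π σ : Equiv.Perm (Fin n)) : ℕ :=
  (Finset.univ.filter fun j => mp n r π j ≠ mp n r σ j).card

/-- Permutations of a product fixing the first component correspond to families of
permutations of the second factor. -/
def fiberPermEquiv (α β : Type*) :
    {ρ : Equiv.Perm (α × β) // ∀ x, (ρ x).1 = x.1} ≃ (α → Equiv.Perm β) where
  toFun ρ a :=
    { toFun := fun b => (ρ.1 (a, b)).2
      invFun := fun b => (ρ.1.symm (a, b)).2
      left_inv := by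
        intro b
        have h1 : (a, (ρ.1 (a, b)).2) = ρ.1 (a, b) := Prod.ext (ρ.2 (a, b)).symm rfl
        show (ρ.1.symm (a, (ρ.1 (a, b)).2)).2 = b
        rw [h1, Equiv.symm_apply_apply]
      right_inv := by
        intro b
        have hs : (ρ.1.symm (a, b)).1 = a := by
          have := ρ.2 (ρ.1.symm (a, b))
          rw [Equiv.apply_symm_apply] at this
          exact this.symm
        have h1 : (a, (ρ.1.symm (a, b)).2) = ρ.1.symm (a, b) := Prod.ext hs.symm rfl
        show (ρ.1 (a, (ρ.1.symm (a, b)).2)).2 = b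
        rw [h1, Equiv.apply_symm_apply] }
  invFun f := ⟨Equiv.prodCongrRight f, fun _ => rfl⟩
  left_inv := by
    intro ρ
    apply Subtype.ext
    apply Equiv.ext
    intro x
    exact Prod.ext (ρ.2 x).symm rfl
  right_inv := by
    intro f
    funext a
    apply Equiv.ext
    intro b
    rfl

/-- Each equivalence class of `S_n` under `≡_r` has exactly `(r!)^{n/r}` elements. -/
theorem card_equivR_class (n r : ℕ) (hn : 0 < n) (hr : 0 < r) (hdvd : r ∣ n)
    (π : Equiv.Perm (Fin n)) :
    Nat.card {σ : Equiv.Perm (Fin n) // mp n r σ = mp n r π} =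
      (Nat.factorial r) ^ (n / r) := by
  set k := n / r with hkdef
  have hk : k * r = n := Nat.div_mul_cancel hdvd
  let E : Fin k × Fin r ≃ Fin n := finProdFinEquiv.trans (finCongr hk)
  have key1 : ∀ y : Fin n, ((E.symm y).1 : ℕ) = (y : ℕ) / r := fun y => rfl
  have key2 : ∀ x : Fin k × Fin r, ((E x : ℕ)) / r = (x.1 : ℕ) := by
    intro x
    show ((x.2 : ℕ) + r * (x.1 : ℕ)) / r = (x.1 : ℕ)
    rw [Nat.add_mul_div_left _ _ hr, Nat.div_eq_of_lt x.2.2, Nat.zero_add]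
  -- first equivalence: translate by π
  have e1 : {σ : Equiv.Perm (Fin n) // mp n r σ = mp n r π} ≃
      {τ : Equiv.Perm (Fin n) // ∀ i : Fin n, ((τ i : ℕ)) / r = (i : ℕ) / r} := by
    refine Equiv.subtypeEquiv (Equiv.mulLeft π⁻¹) fun σ => ?_
    constructor
    · intro H i
      have h := congrFun H (σ i)
      simp only [mp, Equiv.symm_apply_apply] at h
      show ((π.symm (σ i) : ℕ)) / r = (i : ℕ) / r
      exact h.symm
    · intro H
      funext j
      have h := H (σ.symm j)
      show (σ.symm j : ℕ) / r = (π.symm j : ℕ) / r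
      have h2 : (Equiv.mulLeft π⁻¹ σ) (σ.symm j) = π.symm j := by
        show (π⁻¹ * σ) (σ.symm j) = π.symm j
        rw [Equiv.Perm.mul_apply, Equiv.apply_symm_apply, Equiv.Perm.inv_def]
      rw [h2] at h
      exact h.symm
  have e2 : {τ : Equiv.Perm (Fin n) // ∀ i : Fin n, ((τ i : ℕ)) / r = (i : ℕ) / r} ≃
      {ρ : Equiv.Perm (Fin k × Fin r) // ∀ x, (ρ x).1 = x.1} := by
    refine Equiv.subtypeEquiv E.permCongr.symm fun τ => ?_
    constructor
    · intro H x
      apply Fin.ext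
      show ((E.permCongr.symm τ x).1 : ℕ) = (x.1 : ℕ)
      rw [Equiv.permCongr_symm_apply, key1, H (E x), key2]
    · intro H i
      have h := H (E.symm i)
      rw [Equiv.permCongr_symm_apply, Equiv.apply_symm_apply] at h
      have h' := congrArg Fin.val h
      rwa [key1, key1] at h'
  have := Nat.card_congr (e1.trans (e2.trans (fiberPermEquiv (Fin k) (Fin r))))
  rw [this, Nat.card_eq_fintype_card]
  simp [Fintype.card_perm]
end

section
/- For any translocation φ, any permutation π ∈ S_n, and any rank i ∈ [n/r], the intersection |o^r_π(i) ∩ o^r_{πφ}(i)| ≥ r − 1; that is, a single translocation changes at most one element of each rank. -/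
/-- `B` is obtained from `A` by moving a single element to another position. -/
def MovedOne {α : Type*} (A B : List α) : Prop :=
  ∃ (l₁ l₂ l₁' l₂' : List α) (x : α),
    A = l₁ ++ x :: l₂ ∧ B = l₁' ++ x :: l₂' ∧ l₁ ++ l₂ = l₁' ++ l₂'

/-- `φ` is a translocation: it is obtained from the identity permutation by moving one
element to another position (shifting the elements in between by one). -/
def IsTranslocation (n : ℕ) (φ : Equiv.Perm (Fin n)) : Prop :=
  MovedOne (List.ofFn (fun i : Fin n => i)) (List.ofFn φ)


lemma my_div_eq_iff (r i m : ℕ) (hr : 0 < r) : m / r = i ↔ i * r ≤ m ∧ m < i * r + r := by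
  constructor
  · intro h
    have h1 : i * r + m % r = m := by
      rw [Nat.mul_comm, ← h]; exact Nat.div_add_mod m r
    have h2 := Nat.mod_lt m hr
    omega
  · intro ⟨h1, h2⟩
    exact Nat.div_eq_of_lt_le h1 (by rw [Nat.succ_mul]; omega)

lemma transloc_exists (n : ℕ) (φ : Equiv.Perm (Fin n)) (hφ : IsTranslocation n φ) :
    ∃ a b, a < n ∧ b < n ∧ ∀ m : Fin n,
      (φ m : ℕ) = if (m:ℕ) = b then a
        else if (m:ℕ) < b then (if (m:ℕ) < a then (m:ℕ) else (m:ℕ)+1)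
        else (if (m:ℕ) ≤ a then (m:ℕ)-1 else (m:ℕ)) := by
  obtain ⟨l₁, l₂, l₁', l₂', x, hA, hB, hC⟩ := hφ
  have hAlen : l₁.length + (l₂.length + 1) = n := by
    have := congrArg List.length hA; simpa using this.symm
  have hBlen : l₁'.length + (l₂'.length + 1) = n := by
    have := congrArg List.length hB; simpa using this.symm
  set a := l₁.length with ha_def
  set b := l₁'.length with hb_def
  have ha : a < n := by omega
  have hb : b < n := by omega
  -- values of A
  have hAval : ∀ (m : ℕ) (h : m < n),
      (l₁ ++ x :: l₂)[m]'(by simp; omega) = (⟨m, h⟩ : Fin n) := by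
    intro m h
    have h0 := List.getElem_of_eq hA (show m < (List.ofFn fun i : Fin n => i).length by
      simpa using h)
    rw [List.getElem_ofFn] at h0
    exact h0.symm
  -- x = a
  have hx : (x : ℕ) = a := by
    have h0 := hAval a ha
    rw [List.getElem_append] at h0
    rw [dif_neg (show ¬ a < l₁.length by omega)] at h0
    simp only [show a - l₁.length = 0 by omega, List.getElem_cons_zero] at h0
    exact congrArg Fin.val h0
  -- values of C = l₁ ++ l₂
  have hCval : ∀ (m : ℕ) (h : m < n - 1),
      (((l₁ ++ l₂)[m]'(by simp; omega)) : ℕ) = if m < a then m else m + 1 := by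
    intro m h
    rw [List.getElem_append]
    by_cases hma : m < a
    · rw [dif_pos (show m < l₁.length by omega), if_pos hma]
      have h0 := hAval m (by omega)
      rw [List.getElem_append, dif_pos (show m < l₁.length by omega)] at h0
      exact congrArg Fin.val h0
    · rw [dif_neg (show ¬ m < l₁.length by omega), if_neg hma]
      have h0 := hAval (m + 1) (by omega)
      rw [List.getElem_append] at h0
      rw [dif_neg (show ¬ m + 1 < l₁.length by omega)] at h0
      simp only [show m + 1 - l₁.length = (m - l₁.length) + 1 by omega,
        List.getElem_cons_succ] at h0
      exact congrArg Fin.val h0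
  refine ⟨a, b, ha, hb, fun m => ?_⟩
  have hm : (m : ℕ) < n := m.isLt
  have hφm : φ m = (l₁' ++ x :: l₂')[(m:ℕ)]'(by simp; omega) := by
    have h0 := List.getElem_of_eq hB (show (m:ℕ) < (List.ofFn φ).length by simpa using hm)
    rw [List.getElem_ofFn] at h0
    simpa using h0
  have hCval' : ∀ (m : ℕ) (h : m < n - 1),
      (((l₁' ++ l₂')[m]'(by simp; omega)) : ℕ) = if m < a then m else m + 1 := by
    intro k hk
    have h0 := List.getElem_of_eq hC (show k < (l₁ ++ l₂).length by simp; omega)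
    rw [← h0]
    exact hCval k hk
  by_cases hmb : (m:ℕ) = b
  · rw [if_pos hmb, ← hx]
    rw [List.getElem_append, dif_neg (show ¬ (m:ℕ) < l₁'.length by omega)] at hφm
    simp only [show (m:ℕ) - l₁'.length = 0 by omega, List.getElem_cons_zero] at hφm
    exact congrArg Fin.val hφm
  · rw [if_neg hmb]
    by_cases hlt : (m:ℕ) < b
    · rw [if_pos hlt]
      rw [List.getElem_append, dif_pos (show (m:ℕ) < l₁'.length by omega)] at hφm
      have h0 := hCval' (m:ℕ) (by omega)
      rw [List.getElem_append, dif_pos (show (m:ℕ) < l₁'.length by omega)] at h0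
      rw [hφm]; exact h0
    · rw [if_neg hlt]
      have hgt : b < (m:ℕ) := by omega
      rw [List.getElem_append, dif_neg (show ¬ (m:ℕ) < l₁'.length by omega)] at hφm
      obtain ⟨c, hc⟩ : ∃ c, (m:ℕ) - l₁'.length = c + 1 := ⟨(m:ℕ) - l₁'.length - 1, by omega⟩
      simp only [hc, List.getElem_cons_succ] at hφm
      have h0 := hCval' ((m:ℕ) - 1) (by omega)
      rw [List.getElem_append, dif_neg (show ¬ (m:ℕ) - 1 < l₁'.length by omega)] at h0
      simp only [show (m:ℕ) - 1 - l₁'.length = c by omega] at h0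
      rw [hφm]
      rw [h0]
      by_cases hma : (m:ℕ) ≤ a
      · rw [if_pos (show (m:ℕ) - 1 < a by omega), if_pos hma]
      · rw [if_neg (show ¬ (m:ℕ) - 1 < a by omega), if_neg hma]
        omega

/-- A single translocation changes at most one element of each rank:
`|o^r_π(i) ∩ o^r_{πφ}(i)| ≥ r − 1` for every rank `i ∈ [n/r]`. -/
theorem translocation_changes_at_most_one_per_rank (n r : ℕ) (hn : 0 < n) (hr : 0 < r)
    (hdvd : r ∣ n) (φ π : Equiv.Perm (Fin n)) (hφ : IsTranslocation n φ)
    (i : ℕ) (hi : i < n / r) :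
    r - 1 ≤ ((part n r π i) ∩ (part n r (π * φ) i)).card := by
  classical
  obtain ⟨a, b, ha, hb, hval⟩ := transloc_exists n φ hφ
  have hsymm : ∀ j, (π * φ).symm j = φ.symm (π.symm j) := fun j => rfl
  set S : Finset (Fin n) := Finset.univ.filter (fun m : Fin n => (m:ℕ) / r = i) with hS_def
  set T : Finset (Fin n) := S.filter (fun m => ((φ m : ℕ)) / r = i) with hT_def
  -- the intersection has the same cardinality as T
  have hmemT : ∀ m : Fin n, m ∈ T ↔ (m:ℕ) / r = i ∧ ((φ m : ℕ)) / r = i := by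
    intro m; simp [hT_def, hS_def]
  have hmemI : ∀ j : Fin n, j ∈ (part n r π i) ∩ (part n r (π * φ) i) ↔
      ((π.symm j : ℕ) / r = i ∧ ((φ.symm (π.symm j) : ℕ)) / r = i) := by
    intro j
    unfold part mp
    rw [Finset.mem_inter, Finset.mem_filter, Finset.mem_filter]
    simp [hsymm]
  have hcard : ((part n r π i) ∩ (part n r (π * φ) i)).card = T.card := by
    apply Finset.card_bij' (i := fun j _ => φ.symm (π.symm j)) (j := fun m _ => π (φ m))
    · intro j hj
      rw [hmemI] at hj
      rw [hmemT]
      refine ⟨hj.2, ?_⟩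
      rw [Equiv.apply_symm_apply]
      exact hj.1
    · intro m hm
      rw [hmemT] at hm
      rw [hmemI]
      simp only [Equiv.symm_apply_apply]
      exact ⟨hm.2, hm.1⟩
    · intro j hj; simp
    · intro m hm; simp
  rw [hcard]
  -- S has exactly r elements
  have hin : i * r + r ≤ n := by
    have h1 : (i + 1) * r ≤ (n / r) * r := Nat.mul_le_mul_right r hi
    rw [Nat.div_mul_cancel hdvd, Nat.add_mul, one_mul] at h1
    omega
  have hSr : S.card = r := by
    have himg : S.image Fin.val = Finset.Ico (i * r) (i * r + r) := by
      ext k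
      simp only [Finset.mem_image, Finset.mem_Ico, hS_def, Finset.mem_filter,
        Finset.mem_univ, true_and]
      constructor
      · rintro ⟨m, hm, rfl⟩
        exact (my_div_eq_iff r i m hr).1 hm
      · rintro ⟨h1, h2⟩
        exact ⟨⟨k, by omega⟩, (my_div_eq_iff r i k hr).2 ⟨h1, h2⟩, rfl⟩
    have hci := Finset.card_image_of_injective S Fin.val_injective
    rw [himg, Nat.card_Ico] at hci
    omega
  -- the set of "bad" elements has at most one element
  have key : ∀ m : Fin n, (m:ℕ) / r = i → ¬ ((φ m : ℕ) / r = i) →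
      ((m:ℕ) = b ∧ ¬(i * r ≤ a ∧ a < i * r + r)) ∨
      (a ≤ (m:ℕ) ∧ (m:ℕ) < b ∧ (m:ℕ) + 1 = i * r + r) ∨
      (b < (m:ℕ) ∧ (m:ℕ) ≤ a ∧ (m:ℕ) = i * r) := by
    intro m hm hbad
    have e₁ := (my_div_eq_iff r i m hr).1 hm
    rw [hval m, my_div_eq_iff _ _ _ hr] at hbad
    split_ifs at hbad <;> omega
  have hbad1 : (S.filter (fun m => ¬ ((φ m : ℕ)) / r = i)).card ≤ 1 := by
    rw [Finset.card_le_one]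
    intro m₁ h₁ m₂ h₂
    rw [Finset.mem_filter, hS_def, Finset.mem_filter] at h₁ h₂
    have d₁ := key m₁ h₁.1.2 h₁.2
    have d₂ := key m₂ h₂.1.2 h₂.2
    have e₁ := (my_div_eq_iff r i m₁ hr).1 h₁.1.2
    have e₂ := (my_div_eq_iff r i m₂ hr).1 h₂.1.2
    apply Fin.ext
    omega
  have hsplit := Finset.card_filter_add_card_filter_not
    (s := S) (p := fun m => ((φ m : ℕ)) / r = i)
  rw [hSr] at hsplit
  rw [hT_def]
  omega
end

section
/- For π, σ ∈ S_n and r dividing n, the r-regular Ulam distance and r-regular Hamming distance satisfy (r/n)·d_H^r(π,σ) ≤ d_∘^r(π,σ) ≤ d_H^r(π,σ). -/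
/-- Length of a longest common subsequence of two lists. -/
noncomputable def lcsLen {α : Type*} (A B : List α) : ℕ :=
  sSup {k | ∃ l : List α, l.length = k ∧ l.Sublist A ∧ l.Sublist B}

/-- Ulam distance between two lists of the same length (length minus LCS length). -/
noncomputable def ulamList {α : Type*} (A B : List α) : ℕ := A.length - lcsLen A B

/-- The Ulam distance between two permutations of `Fin n`. -/
noncomputable def ulam (n : ℕ) (π σ : Equiv.Perm (Fin n)) : ℕ :=
  n - lcsLen (List.ofFn π) (List.ofFn σ)

/-- The `r`-regular Ulam distance: minimum Ulam distance between members of the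
`≡_r`-equivalence classes of `π` and `σ`. -/
noncomputable def ulamR (n r : ℕ) (π σ : Equiv.Perm (Fin n)) : ℕ :=
  sInf {k | ∃ π' σ' : Equiv.Perm (Fin n),
    mp n r π' = mp n r π ∧ mp n r σ' = mp n r σ ∧ k = ulam n π' σ'}

section AuxProof

open Finset

lemma sm_le : ∀ (k : ℕ) (s : Fin k → ℕ), StrictMono s → ∀ v (hv : v < k), v ≤ s ⟨v, hv⟩ := by
  intro k s hs v
  induction v with
  | zero => intro _; exact Nat.zero_le _
  | succ i ih =>
    intro hv
    have h1 : i < k := Nat.lt_of_succ_lt hv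
    have h2 := ih h1
    have h3 : s ⟨i, h1⟩ < s ⟨i + 1, hv⟩ := hs (by simp [Fin.lt_def])
    omega

lemma emb_bounds {k n : ℕ} (f : Fin k ↪o Fin n) (t : Fin k) :
    (t : ℕ) ≤ (f t : ℕ) ∧ (f t : ℕ) + k ≤ n + t := by
  have hmono : StrictMono fun u : Fin k => (f u : ℕ) := fun a b hab => by
    exact_mod_cast f.strictMono hab
  constructor
  · have := sm_le k _ hmono t.val t.isLt
    simpa using this
  · have hrev : StrictMono fun u : Fin k => (n - 1) - (f u.rev : ℕ) := by
      intro a b hab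
      have h1 : (f b.rev : ℕ) < (f a.rev : ℕ) := hmono (by simpa [Fin.rev_lt_rev] using hab)
      have h2 : (f a.rev : ℕ) < n := (f a.rev).isLt
      show (n - 1) - (f a.rev : ℕ) < (n - 1) - (f b.rev : ℕ)
      omega
    have := sm_le k _ hrev t.rev.val t.rev.isLt
    simp only [Fin.eta] at this
    rw [Fin.rev_rev] at this
    have h4 : (t.rev : ℕ) = k - (t + 1) := Fin.val_rev t
    have h5 : (f t : ℕ) < n := (f t).isLt
    have h6 : (t : ℕ) < k := t.isLt
    omega

lemma card_filter_lt (n c : ℕ) (hc : c ≤ n) :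
    ((univ : Finset (Fin n)).filter fun p : Fin n => (p : ℕ) < c).card = c := by
  refine Eq.trans (Finset.card_bij (fun (p : Fin n) _ => (p : ℕ)) ?_ ?_ ?_) (Finset.card_range c)
  · intro a ha; simp only [mem_filter] at ha; simpa using ha.2
  · intro a _ b _ h; exact Fin.ext h
  · intro b hb
    simp only [Finset.mem_range] at hb
    exact ⟨⟨b, lt_of_lt_of_le hb hc⟩, by simp [hb], rfl⟩

lemma mem_iff_lt_card_of_dc {n : ℕ} (S : Finset (Fin n))
    (hdc : ∀ p q : Fin n, p ≤ q → q ∈ S → p ∈ S) (p : Fin n) :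
    p ∈ S ↔ (p : ℕ) < S.card := by
  constructor
  · intro hp
    have h1 : Finset.Iic p ⊆ S := fun q hq => hdc q p (Finset.mem_Iic.mp hq) hp
    have := Finset.card_le_card h1
    rw [Fin.card_Iic] at this; omega
  · intro hp
    by_contra hns
    have h1 : S ⊆ Finset.Iio p := by
      intro q hq
      rw [Finset.mem_Iio]
      by_contra hq2
      exact hns (hdc p q (le_of_not_gt hq2) hq)
    have := Finset.card_le_card h1
    rw [Fin.card_Iio] at this; omega

def pkey (n r : ℕ) (π : Equiv.Perm (Fin n)) (j : Fin n) : ℕ := mp n r π j * n + (j : ℕ)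

lemma pkey_inj (n r : ℕ) (π : Equiv.Perm (Fin n)) :
    Function.Injective (pkey n r π) := by
  intro a b h
  unfold pkey at h
  have ha : (a : ℕ) < n := a.isLt
  have hb : (b : ℕ) < n := b.isLt
  have : (a : ℕ) = (b : ℕ) := by
    rcases Nat.lt_trichotomy (mp n r π a) (mp n r π b) with h1 | h1 | h1
    · have := Nat.mul_le_mul_right n (Nat.succ_le_of_lt h1)
      rw [Nat.succ_mul] at this
      omega
    · rw [h1] at h; omega
    · have := Nat.mul_le_mul_right n (Nat.succ_le_of_lt h1)
      rw [Nat.succ_mul] at this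
      omega
  exact Fin.ext this

lemma mp_sort (n r : ℕ) (hr : 0 < r) (hdvd : r ∣ n) (π : Equiv.Perm (Fin n)) :
    mp n r (Tuple.sort (pkey n r π)) = mp n r π := by
  set m := n / r with hm
  have hmn : m * r = n := Nat.div_mul_cancel hdvd
  set τ := Tuple.sort (pkey n r π) with hτ
  have hmono : Monotone fun p => mp n r π (τ p) := by
    intro a b hab
    have hk : pkey n r π (τ a) ≤ pkey n r π (τ b) := Tuple.monotone_sort (pkey n r π) hab
    show mp n r π (τ a) ≤ mp n r π (τ b)
    by_contra hcon
    push_neg at hcon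
    have h2 : mp n r π (τ b) * n + n ≤ mp n r π (τ a) * n := by
      have h3 := Nat.mul_le_mul_right n (Nat.succ_le_of_lt hcon)
      rw [Nat.succ_mul] at h3
      omega
    unfold pkey at hk
    have h4 : (↑(τ a) : ℕ) < n := (τ a).isLt
    have h5 : (↑(τ b) : ℕ) < n := (τ b).isLt
    omega
  have hlt : ∀ j, mp n r π j < m := by
    intro j
    have h1 : (π.symm j : ℕ) < m * r := by rw [hmn]; exact (π.symm j).isLt
    exact (Nat.div_lt_iff_lt_mul hr).mpr h1
  have hcard : ∀ i, i ≤ m →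
      ((univ : Finset (Fin n)).filter fun p : Fin n => mp n r π (τ p) < i).card = i * r := by
    intro i hi
    have e1 : ((univ : Finset (Fin n)).filter fun p : Fin n => mp n r π (τ p) < i).card
        = ((univ : Finset (Fin n)).filter fun j : Fin n => mp n r π j < i).card := by
      apply Finset.card_bij (fun p _ => τ p)
      · intro a ha; simp only [mem_filter, mem_univ, true_and] at ha ⊢; exact ha
      · intro a _ b _ h; exact τ.injective h
      · intro j hj
        simp only [mem_filter, mem_univ, true_and] at hj
        exact ⟨τ.symm j, by simp only [mem_filter, mem_univ, true_and,
          Equiv.apply_symm_apply]; exact hj, by simp⟩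
    have e2 : ((univ : Finset (Fin n)).filter fun j : Fin n => mp n r π j < i).card
        = ((univ : Finset (Fin n)).filter fun p : Fin n => (p : ℕ) < i * r).card := by
      apply Finset.card_bij (fun j _ => π.symm j)
      · intro a ha
        simp only [mem_filter, mem_univ, true_and] at ha ⊢
        exact (Nat.div_lt_iff_lt_mul hr).mp ha
      · intro a _ b _ h; exact π.symm.injective h
      · intro p hp
        simp only [mem_filter, mem_univ, true_and] at hp
        refine ⟨π p, ?_, by simp⟩
        simp only [mem_filter, mem_univ, true_and, mp, Equiv.symm_apply_apply]
        exact Finset.mem_filter.mpr ⟨mem_univ _, by simpa [mp] using (Nat.div_lt_iff_lt_mul hr).mpr hp⟩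
    rw [e1, e2, card_filter_lt n (i * r) (by calc i * r ≤ m * r := Nat.mul_le_mul_right r hi
      _ = n := hmn)]
  have key : ∀ p : Fin n, mp n r π (τ p) = (p : ℕ) / r := by
    intro p
    have hiff : ∀ i, i ≤ m → (mp n r π (τ p) < i ↔ (p : ℕ) < i * r) := by
      intro i hi
      rw [← hcard i hi]
      have hdc : ∀ a b : Fin n, a ≤ b →
          b ∈ (univ : Finset (Fin n)).filter (fun p : Fin n => mp n r π (τ p) < i) →
          a ∈ (univ : Finset (Fin n)).filter (fun p : Fin n => mp n r π (τ p) < i) := by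
        intro a b hab hb
        simp only [mem_filter, mem_univ, true_and] at hb ⊢
        exact lt_of_le_of_lt (hmono hab) hb
      have := mem_iff_lt_card_of_dc _ hdc p
      simp only [mem_filter, mem_univ, true_and] at this
      exact this
    have h1 : mp n r π (τ p) < m := hlt _
    have hpm : (p : ℕ) / r < m := (Nat.div_lt_iff_lt_mul hr).mpr (by rw [hmn]; exact p.isLt)
    have ha := (hiff (mp n r π (τ p) + 1) (by omega)).mp (Nat.lt_succ_self _)
    have hb := (hiff ((p : ℕ) / r + 1) (by omega)).mpr
      ((Nat.div_lt_iff_lt_mul hr).mp (Nat.lt_succ_self _))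
    have ha' : (p : ℕ) / r < mp n r π (τ p) + 1 := (Nat.div_lt_iff_lt_mul hr).mpr ha
    omega
  funext j
  have := key (τ.symm j)
  rw [Equiv.apply_symm_apply] at this
  show (τ.symm j : ℕ) / r = mp n r π j
  omega

lemma ulamR_le_hammR (n r : ℕ) (hr : 0 < r) (hdvd : r ∣ n) (π σ : Equiv.Perm (Fin n)) :
    ulamR n r π σ ≤ hammR n r π σ := by
  classical
  set S : Finset (Fin n) := univ.filter (fun j => mp n r π j = mp n r σ j) with hS
  set π' := Tuple.sort (pkey n r π) with hπ'def
  set σ' := Tuple.sort (pkey n r σ) with hσ'def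
  have hπ' : mp n r π' = mp n r π := mp_sort n r hr hdvd π
  have hσ' : mp n r σ' = mp n r σ := mp_sort n r hr hdvd σ
  set L1 := (List.ofFn ⇑π').filter (fun j => decide (j ∈ S)) with hL1
  set L2 := (List.ofFn ⇑σ').filter (fun j => decide (j ∈ S)) with hL2
  have nodup1 : (List.ofFn ⇑π').Nodup := List.nodup_ofFn.mpr π'.injective
  have nodup2 : (List.ofFn ⇑σ').Nodup := List.nodup_ofFn.mpr σ'.injective
  have hperm : (List.ofFn ⇑π').Perm (List.ofFn ⇑σ') := by
    apply List.perm_of_nodup_nodup_toFinset_eq nodup1 nodup2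
    ext x
    simp only [List.mem_toFinset]
    constructor
    · intro _; exact List.mem_ofFn.mpr ⟨σ'.symm x, by simp⟩
    · intro _; exact List.mem_ofFn.mpr ⟨π'.symm x, by simp⟩
  have hkeyS : ∀ j ∈ S, pkey n r π j = pkey n r σ j := by
    intro j hj
    simp only [hS, mem_filter, mem_univ, true_and] at hj
    unfold pkey
    rw [hj]
  have pw1 : (List.ofFn ⇑π').Pairwise (fun a b => pkey n r π a ≤ pkey n r π b) := by
    rw [List.pairwise_ofFn]
    intro i j hij
    exact Tuple.monotone_sort (pkey n r π) (le_of_lt hij)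
  have pw2 : (List.ofFn ⇑σ').Pairwise (fun a b => pkey n r σ a ≤ pkey n r σ b) := by
    rw [List.pairwise_ofFn]
    intro i j hij
    exact Tuple.monotone_sort (pkey n r σ) (le_of_lt hij)
  have s1 : L1.Pairwise (fun a b => pkey n r π a ≤ pkey n r π b) :=
    pw1.sublist (List.filter_sublist)
  have s2' : L2.Pairwise (fun a b => pkey n r σ a ≤ pkey n r σ b) :=
    pw2.sublist (List.filter_sublist)
  have memS : ∀ j ∈ L2, j ∈ S := by
    intro j hj
    rw [hL2, List.mem_filter] at hj
    exact of_decide_eq_true hj.2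
  have s2 : L2.Pairwise (fun a b => pkey n r π a ≤ pkey n r π b) := by
    refine s2'.imp_of_mem ?_
    intro a b ha hb hab
    rw [hkeyS a (memS a ha), hkeyS b (memS b hb)]
    exact hab
  haveI : IsAntisymm (Fin n) (fun a b => pkey n r π a ≤ pkey n r π b) :=
    ⟨fun a b h1 h2 => pkey_inj n r π (le_antisymm h1 h2)⟩
  have hL12 : L1 = L2 := List.Perm.eq_of_pairwise (fun a b _ _ h1 h2 => pkey_inj n r π (le_antisymm h1 h2)) s1 s2 (hperm.filter _)
  have hnd1 : L1.Nodup := nodup1.sublist (List.filter_sublist)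
  have hlen : L1.length = S.card := by
    have htf : L1.toFinset = S := by
      ext x
      simp only [hL1, List.mem_toFinset, List.mem_filter, decide_eq_true_eq]
      constructor
      · exact fun h => h.2
      · intro h
        exact ⟨List.mem_ofFn.mpr ⟨π'.symm x, by simp⟩, h⟩
    rw [← htf, List.toFinset_card_of_nodup hnd1]
  have hcs : S.card ≤ lcsLen (List.ofFn ⇑π') (List.ofFn ⇑σ') := by
    apply le_csSup
    · refine ⟨n, ?_⟩
      rintro k ⟨l, hl, hA, -⟩
      have := hA.length_le
      simpa [hl] using this
    · exact ⟨L1, hlen, List.filter_sublist, hL12 ▸ List.filter_sublist⟩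
  have hSham : S.card + hammR n r π σ = n := by
    have := Finset.card_filter_add_card_filter_not
      (s := (univ : Finset (Fin n))) (p := fun j => mp n r π j = mp n r σ j)
    simpa [hS, hammR] using this
  have hulam : ulam n π' σ' ≤ hammR n r π σ := by
    unfold ulam
    omega
  exact le_trans (Nat.sInf_le ⟨π', σ', hπ', hσ', rfl⟩) hulam

lemma hamm_le_of_cs (n r m k : ℕ) (hr : 0 < r) (hmn : m * r = n) (hm : 0 < m)
    (π' σ' : Equiv.Perm (Fin n)) (f g : Fin k ↪o Fin n)
    (he : ∀ t, π' (f t) = σ' (g t)) :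
    r * hammR n r π' σ' ≤ n * (n - k) := by
  classical
  have hkn : k ≤ n := by
    have := Fintype.card_le_of_embedding f.toEmbedding
    simpa using this
  set D := n - k with hD
  have hfb : ∀ t : Fin k, (g t : ℕ) ≤ (f t : ℕ) + D ∧ (f t : ℕ) ≤ (g t : ℕ) + D := by
    intro t
    obtain ⟨h1, h2⟩ := emb_bounds f t
    obtain ⟨h3, h4⟩ := emb_bounds g t
    omega
  set e : Fin k → Fin n := fun t => π' (f t) with he'
  have einj : Function.Injective e := fun a b hab => f.injective (π'.injective hab)
  set E : Finset (Fin n) := Finset.univ.image e with hE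
  have hEcard : E.card = k := by
    rw [hE, Finset.card_image_of_injective _ einj, card_univ, Fintype.card_fin]
  set Bad : Finset (Fin k) := Finset.univ.filter
    (fun t : Fin k => (f t : ℕ) / r ≠ (g t : ℕ) / r) with hBad
  have hmpπ : ∀ t : Fin k, mp n r π' (e t) = (f t : ℕ) / r := by
    intro t
    show ((π'.symm (π' (f t)) : Fin n) : ℕ) / r = _
    rw [Equiv.symm_apply_apply]
  have hmpσ : ∀ t : Fin k, mp n r σ' (e t) = (g t : ℕ) / r := by
    intro t
    show ((σ'.symm (π' (f t)) : Fin n) : ℕ) / r = _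
    rw [he t, Equiv.symm_apply_apply]
  have hsub : (Finset.univ.filter fun j => mp n r π' j ≠ mp n r σ' j)
      ⊆ (univ \ E) ∪ Bad.image e := by
    intro j hj
    simp only [mem_filter, mem_univ, true_and] at hj
    rw [Finset.mem_union]
    by_cases hjE : j ∈ E
    · right
      rw [hE, Finset.mem_image] at hjE
      obtain ⟨t, -, ht⟩ := hjE
      refine Finset.mem_image.mpr ⟨t, ?_, ht⟩
      rw [hBad, mem_filter]
      refine ⟨mem_univ _, fun hc => ?_⟩
      apply hj
      rw [← ht, hmpπ, hmpσ, hc]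
    · exact Or.inl (Finset.mem_sdiff.mpr ⟨mem_univ _, hjE⟩)
  have hham : hammR n r π' σ' ≤ D + Bad.card := by
    have h1 : (univ \ E).card = n - k := by
      rw [Finset.card_sdiff_of_subset (Finset.subset_univ _), card_univ, Fintype.card_fin, hEcard]
    have h2 : (Bad.image e).card ≤ Bad.card := Finset.card_image_le
    calc hammR n r π' σ' ≤ ((univ \ E) ∪ Bad.image e).card := Finset.card_le_card hsub
      _ ≤ (univ \ E).card + (Bad.image e).card := Finset.card_union_le _ _
      _ ≤ D + Bad.card := by omega
  have hcover : Bad ⊆ (Finset.Ico 1 m).biUnion (fun i => Finset.univ.filter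
      (fun t : Fin k => ((f t : ℕ) < i * r ∧ i * r ≤ (g t : ℕ)) ∨
        ((g t : ℕ) < i * r ∧ i * r ≤ (f t : ℕ)))) := by
    intro t ht
    rw [hBad, mem_filter] at ht
    rw [Finset.mem_biUnion]
    have hfn : (f t : ℕ) < m * r := by rw [hmn]; exact (f t).isLt
    have hgn : (g t : ℕ) < m * r := by rw [hmn]; exact (g t).isLt
    rcases Nat.lt_or_ge ((f t : ℕ) / r) ((g t : ℕ) / r) with h | h
    · refine ⟨(g t : ℕ) / r, ?_, ?_⟩
      · rw [Finset.mem_Ico]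
        exact ⟨Nat.lt_of_le_of_lt (Nat.zero_le _) h, (Nat.div_lt_iff_lt_mul hr).mpr hgn⟩
      · rw [mem_filter]
        exact ⟨mem_univ _, Or.inl ⟨(Nat.div_lt_iff_lt_mul hr).mp h,
          Nat.div_mul_le_self _ _⟩⟩
    · have h' : (g t : ℕ) / r < (f t : ℕ) / r := lt_of_le_of_ne h (Ne.symm ht.2)
      refine ⟨(f t : ℕ) / r, ?_, ?_⟩
      · rw [Finset.mem_Ico]
        exact ⟨Nat.lt_of_le_of_lt (Nat.zero_le _) h', (Nat.div_lt_iff_lt_mul hr).mpr hfn⟩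
      · rw [mem_filter]
        exact ⟨mem_univ _, Or.inr ⟨(Nat.div_lt_iff_lt_mul hr).mp h',
          Nat.div_mul_le_self _ _⟩⟩
  have hCcard : ∀ i ∈ Finset.Ico 1 m, (Finset.univ.filter
      (fun t : Fin k => ((f t : ℕ) < i * r ∧ i * r ≤ (g t : ℕ)) ∨
        ((g t : ℕ) < i * r ∧ i * r ≤ (f t : ℕ)))).card ≤ D := by
    intro i _
    have hle : (Finset.univ.filter
        (fun t : Fin k => ((f t : ℕ) < i * r ∧ i * r ≤ (g t : ℕ)) ∨
          ((g t : ℕ) < i * r ∧ i * r ≤ (f t : ℕ)))).card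
        ≤ (Finset.Ico (i * r - D) (i * r)).card := by
      apply Finset.card_le_card_of_injOn (fun t => min (f t : ℕ) (g t : ℕ))
      · intro t ht
        simp only [Finset.mem_coe, mem_filter, mem_univ, true_and] at ht
        have hb := hfb t
        simp only [Finset.mem_coe, Finset.mem_Ico]
        rcases ht with ⟨h1, h2⟩ | ⟨h1, h2⟩ <;> omega
      · intro a ha b hb hab
        simp only [Finset.coe_filter, Set.mem_setOf_eq, mem_univ, true_and] at ha hb
        have main : ∀ a b : Fin k, a < b →
            (((f a : ℕ) < i * r ∧ i * r ≤ (g a : ℕ)) ∨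
              ((g a : ℕ) < i * r ∧ i * r ≤ (f a : ℕ))) →
            (((f b : ℕ) < i * r ∧ i * r ≤ (g b : ℕ)) ∨
              ((g b : ℕ) < i * r ∧ i * r ≤ (f b : ℕ))) →
            min (f a : ℕ) (g a : ℕ) ≠ min (f b : ℕ) (g b : ℕ) := by
          intro a b hab' hA hB
          have hf1 : (f a : ℕ) < (f b : ℕ) := by exact_mod_cast f.strictMono hab'
          have hg1 : (g a : ℕ) < (g b : ℕ) := by exact_mod_cast g.strictMono hab'
          rcases hA with ⟨h1, h2⟩ | ⟨h1, h2⟩ <;> rcases hB with ⟨h3, h4⟩ | ⟨h3, h4⟩ <;> omega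
        rcases lt_trichotomy a b with h | h | h
        · exact absurd hab (main a b h ha hb)
        · exact h
        · exact absurd hab.symm (main b a h hb ha)
    refine le_trans hle ?_
    rw [Nat.card_Ico]
    omega
  have hbadcard : Bad.card ≤ (m - 1) * D := by
    calc Bad.card ≤ _ := Finset.card_le_card hcover
      _ ≤ ∑ i ∈ Finset.Ico 1 m, (Finset.univ.filter
          (fun t : Fin k => ((f t : ℕ) < i * r ∧ i * r ≤ (g t : ℕ)) ∨
            ((g t : ℕ) < i * r ∧ i * r ≤ (f t : ℕ)))).card := Finset.card_biUnion_le
      _ ≤ (m - 1) * D := by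
          refine le_trans (Finset.sum_le_card_nsmul _ _ D hCcard) ?_
          rw [Nat.card_Ico, smul_eq_mul]
  have hmm : m - 1 + 1 = m := Nat.succ_pred_eq_of_pos hm
  have hfin : hammR n r π' σ' ≤ m * D := by
    calc hammR n r π' σ' ≤ D + (m - 1) * D := by omega
      _ = (m - 1 + 1) * D := by ring
      _ = m * D := by rw [hmm]
  calc r * hammR n r π' σ' ≤ r * (m * D) := Nat.mul_le_mul_left r hfin
    _ = (m * r) * D := by ring
    _ = n * D := by rw [hmn]

end AuxProof

open Finset in
/-- Relationship between the `r`-regular Ulam and Hamming distances: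
`(r/n)·d_H^r(π,σ) ≤ d_∘^r(π,σ) ≤ d_H^r(π,σ)` (first inequality stated in
cross-multiplied form). -/
theorem ulamR_le_hammR_and_ge (n r : ℕ) (hn : 0 < n) (hr : 0 < r) (hdvd : r ∣ n)
    (π σ : Equiv.Perm (Fin n)) :
    r * hammR n r π σ ≤ n * ulamR n r π σ ∧ ulamR n r π σ ≤ hammR n r π σ := by
  classical
  refine ⟨?_, ulamR_le_hammR n r hr hdvd π σ⟩
  set m := n / r with hm
  have hmn : m * r = n := Nat.div_mul_cancel hdvd
  have hm0 : 0 < m := by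
    rcases Nat.eq_zero_or_pos m with h | h
    · rw [h, zero_mul] at hmn; omega
    · exact h
  have hne : {k | ∃ π' σ' : Equiv.Perm (Fin n),
      mp n r π' = mp n r π ∧ mp n r σ' = mp n r σ ∧ k = ulam n π' σ'}.Nonempty :=
    ⟨ulam n π σ, π, σ, rfl, rfl, rfl⟩
  obtain ⟨π₀, σ₀, hπ₀, hσ₀, hu⟩ := Nat.sInf_mem hne
  have hequ : ulamR n r π σ = ulam n π₀ σ₀ := hu
  have hhamm : hammR n r π σ = hammR n r π₀ σ₀ := by
    unfold hammR
    rw [hπ₀, hσ₀]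
  rw [hequ, hhamm]
  have hA' : (List.ofFn ⇑π₀).length = n := by simp
  have hB' : (List.ofFn ⇑σ₀).length = n := by simp
  have hKne : {k | ∃ l : List (Fin n), l.length = k ∧ l.Sublist (List.ofFn ⇑π₀) ∧ l.Sublist (List.ofFn ⇑σ₀)}.Nonempty :=
    ⟨0, [], rfl, List.nil_sublist _, List.nil_sublist _⟩
  have hKbdd : BddAbove {k | ∃ l : List (Fin n), l.length = k ∧ l.Sublist (List.ofFn ⇑π₀) ∧ l.Sublist (List.ofFn ⇑σ₀)} := by
    refine ⟨n, ?_⟩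
    rintro k ⟨l, hl, hsubA, -⟩
    have := hsubA.length_le
    simpa [hl] using this
  have hmemK : lcsLen (List.ofFn ⇑π₀) (List.ofFn ⇑σ₀) ∈
      {k | ∃ l : List (Fin n), l.length = k ∧ l.Sublist (List.ofFn ⇑π₀) ∧ l.Sublist (List.ofFn ⇑σ₀)} := by
    unfold lcsLen
    exact Nat.sSup_mem hKne hKbdd
  obtain ⟨l, hlen, hsubA, hsubB⟩ := hmemK
  obtain ⟨f0, hf0⟩ := List.sublist_iff_exists_fin_orderEmbedding_get_eq.mp hsubA
  obtain ⟨g0, hg0⟩ := List.sublist_iff_exists_fin_orderEmbedding_get_eq.mp hsubB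
  let f : Fin l.length ↪o Fin n := f0.trans (Fin.castOrderIso hA').toOrderEmbedding
  let g : Fin l.length ↪o Fin n := g0.trans (Fin.castOrderIso hB').toOrderEmbedding
  have he : ∀ t, π₀ (f t) = σ₀ (g t) := by
    intro t
    have h1 := hf0 t
    have h2 := hg0 t
    rw [List.get_ofFn] at h1
    rw [List.get_ofFn] at h2
    have e1 : π₀ (f t) = l.get t := by
      rw [h1]
      congr 1
    have e2 : σ₀ (g t) = l.get t := by
      rw [h2]
      congr 1
    rw [e1, e2]
  have hmain := hamm_le_of_cs n r m l.length hr hmn hm0 π₀ σ₀ f g he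
  have : ulam n π₀ σ₀ = n - l.length := by
    unfold ulam
    rw [hlen]
  rw [this]
  exact hmain
end

section
/- For disjoint sets P ⊆ [n] and Q = [n] \ P, and permutations π, σ ∈ S_n, the Ulam distance satisfies d_∘(π,σ) ≥ d_∘(π_P, σ_P) + d_∘(π_Q, σ_Q), where π_P denotes the subsequence of π consisting of its elements in P. -/
/-- The projection of a permutation `π` of `Fin n` onto a set `P`: the subsequence of
`π` (as the sequence `π(1),…,π(n)`) consisting of its elements belonging to `P`. -/
def projL (n : ℕ) (π : Equiv.Perm (Fin n)) (P : Finset (Fin n)) : List (Fin n) :=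
  (List.ofFn π).filter (fun x => x ∈ P)


lemma lcs_nonempty {α : Type*} (A B : List α) :
    {k | ∃ l : List α, l.length = k ∧ l.Sublist A ∧ l.Sublist B}.Nonempty :=
  ⟨0, [], rfl, List.nil_sublist _, List.nil_sublist _⟩

lemma lcs_bdd {α : Type*} (A B : List α) :
    BddAbove {k | ∃ l : List α, l.length = k ∧ l.Sublist A ∧ l.Sublist B} := by
  refine ⟨A.length, fun k ⟨l, hl, hA, _⟩ => ?_⟩
  exact hl ▸ hA.length_le

lemma lcsLen_le_length {α : Type*} (A B : List α) : lcsLen A B ≤ A.length :=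
  csSup_le (lcs_nonempty A B) (fun _ ⟨l, hl, hA, _⟩ => hl ▸ hA.length_le)

lemma le_lcsLen {α : Type*} {A B l : List α} (hA : l.Sublist A) (hB : l.Sublist B) :
    l.length ≤ lcsLen A B :=
  le_csSup (lcs_bdd A B) ⟨l, rfl, hA, hB⟩

lemma lcsLen_mem {α : Type*} (A B : List α) :
    ∃ l : List α, l.length = lcsLen A B ∧ l.Sublist A ∧ l.Sublist B :=
  Nat.sSup_mem (lcs_nonempty A B) (lcs_bdd A B)

lemma filter_split {α : Type*} (l : List α) (p : α → Bool) :
    (l.filter p).length + (l.filter fun a => !p a).length = l.length := by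
  induction l with
  | nil => simp
  | cons a t ih =>
    by_cases h : p a <;> simp [List.filter_cons, h] <;> omega

/-- The Ulam distance of two permutations is at least the sum of the Ulam distances of
their projections onto `P` and onto `Q = [n] \ P`. -/
theorem ulam_ge_sum_of_projections (n : ℕ) (P : Finset (Fin n))
    (π σ : Equiv.Perm (Fin n)) :
    ulamList (projL n π P) (projL n σ P) + ulamList (projL n π Pᶜ) (projL n σ Pᶜ) ≤
      ulam n π σ := by
  obtain ⟨l, hl, hA, hB⟩ := lcsLen_mem (List.ofFn π) (List.ofFn σ)
  have hcompl : ∀ (m : List (Fin n)),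
      m.filter (fun x => x ∈ Pᶜ) = m.filter (fun x => !(x ∈ P : Bool)) := by
    intro m; apply List.filter_congr; intro x _; simp
  have h1 : (l.filter (fun x => x ∈ P)).length ≤ lcsLen (projL n π P) (projL n σ P) :=
    le_lcsLen (hA.filter _) (hB.filter _)
  have h2 : (l.filter (fun x => !(x ∈ P : Bool))).length ≤
      lcsLen (projL n π Pᶜ) (projL n σ Pᶜ) := by
    apply le_lcsLen (l := l.filter _) <;>
      simp only [projL, hcompl] <;> [exact hA.filter _; exact hB.filter _]
  have h3 := filter_split l (fun x => (x ∈ P : Bool))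
  have h4 : (projL n π P).length + (projL n π Pᶜ).length = n := by
    simp only [projL, hcompl]
    rw [filter_split]; simp
  have h5 := lcsLen_le_length (projL n π P) (projL n σ P)
  have h6 := lcsLen_le_length (projL n π Pᶜ) (projL n σ Pᶜ)
  have h7 : lcsLen (List.ofFn π) (List.ofFn σ) ≤ n := by
    have := lcsLen_le_length (List.ofFn π) (List.ofFn σ); simpa using this
  simp only [ulamList, ulam]
  omega
end

section
/- Singleton bound for constant composition codes: for positive integers n, r, d with r | n, the maximum size A_H(n,r,d) of an r-regular multipermutation code of length n with minimum Hamming distance d satisfies A_H(n,r,d) ≤ (n/r)^{n-d+1}. -/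
/-- `f : Fin n → ℕ` is an `r`-regular multipermutation over the alphabet `[n/r]`. -/
def IsRegularM (n r : ℕ) (f : Fin n → ℕ) : Prop :=
  (∀ j, f j < n / r) ∧ ∀ i < n / r, (Finset.univ.filter fun j => f j = i).card = r

/-- Hamming distance between two functions on `Fin n`. -/
def hammF (n : ℕ) (f g : Fin n → ℕ) : ℕ :=
  (Finset.univ.filter fun j => f j ≠ g j).card

/-- `AH n r d` : the maximum size of an `r`-regular multipermutation code of length `n`
with minimum Hamming distance `d`. -/
noncomputable def AH (n r d : ℕ) : ℕ :=
  sSup {M | ∃ C : Finset (Fin n → ℕ), C.card = M ∧ (∀ f ∈ C, IsRegularM n r f) ∧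
    ∀ f ∈ C, ∀ g ∈ C, f ≠ g → d ≤ hammF n f g}


/-- Singleton bound for constant composition codes:
`A_H(n,r,d) ≤ (n/r)^{n-d+1}`. -/
theorem AH_singleton_bound (n r d : ℕ) (hn : 0 < n) (hr : 0 < r) (hd : 0 < d)
    (hdvd : r ∣ n) :
    AH n r d ≤ (n / r) ^ (n - d + 1) := by
  set m := n - d + 1 with hm
  have hmn : m ≤ n := by omega
  have hq : 0 < n / r := Nat.div_pos (Nat.le_of_dvd hn hdvd) hr
  unfold AH
  have hne : {M | ∃ C : Finset (Fin n → ℕ), C.card = M ∧ (∀ f ∈ C, IsRegularM n r f) ∧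
      ∀ f ∈ C, ∀ g ∈ C, f ≠ g → d ≤ hammF n f g}.Nonempty := ⟨0, ∅, by simp⟩
  apply csSup_le hne
  rintro M ⟨C, rfl, hreg, hdist⟩
  have key : ∀ f ∈ C, ∀ j, f j < n / r := fun f hf j => (hreg f hf).1 j
  classical
  let ψ : (Fin n → ℕ) → (Fin m → Fin (n / r)) :=
    fun f j => ⟨f (Fin.castLE hmn j) % (n / r), Nat.mod_lt _ hq⟩
  have hinj : Set.InjOn ψ C := by
    intro f hf g hg hfg
    have hagree : ∀ j : Fin m, f (Fin.castLE hmn j) = g (Fin.castLE hmn j) := by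
      intro j
      have := congrFun hfg j
      simp only [ψ, Fin.mk.injEq] at this
      rwa [Nat.mod_eq_of_lt (key f hf _), Nat.mod_eq_of_lt (key g hg _)] at this
    by_contra hne
    have hdle := hdist f hf g hg hne
    have hsub : Finset.univ.filter (fun j : Fin n => f j ≠ g j) ⊆
        Finset.univ.filter (fun j : Fin n => m ≤ (j : ℕ)) := by
      intro j hj
      simp only [Finset.mem_filter, Finset.mem_univ, true_and] at hj ⊢
      by_contra hlt
      push_neg at hlt
      exact hj (hagree ⟨j, hlt⟩)
    have hcard1 : (Finset.univ.filter (fun j : Fin n => (j : ℕ) < m)).card = m := by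
      have : Finset.univ.filter (fun j : Fin n => (j : ℕ) < m)
          = Finset.map (Fin.castLEEmb hmn) Finset.univ := by
        ext j
        simp only [Finset.mem_filter, Finset.mem_univ, true_and, Finset.mem_map,
          Fin.castLEEmb_apply]
        constructor
        · intro h; exact ⟨⟨j, h⟩, rfl⟩
        · rintro ⟨k, rfl⟩; exact k.isLt
      simp [this]
    have hcard2 : (Finset.univ.filter (fun j : Fin n => m ≤ (j : ℕ))).card = n - m := by
      have := Finset.card_filter_add_card_filter_not
        (s := (Finset.univ : Finset (Fin n))) (p := fun j : Fin n => (j : ℕ) < m)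
      simp only [not_lt] at this
      have hu : (Finset.univ : Finset (Fin n)).card = n := by simp
      omega
    have : hammF n f g ≤ n - m := hcard2 ▸ Finset.card_le_card hsub
    omega
  calc C.card = (C.image ψ).card := (Finset.card_image_of_injOn hinj).symm
    _ ≤ Fintype.card (Fin m → Fin (n / r)) := Finset.card_le_univ _
    _ = (n / r) ^ m := by simp
end

section
/- Refined Singleton bound: A_H(n,r,d) ≤ S(n-d+1, n/r, r), where S(l,m,r) is the number of sequences of length l over alphabet [m] in which no symbol appears more than r times. -/
/-- `S l m r` : the number of sequences of length `l` over the alphabet `[m]` in which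
no symbol appears more than `r` times. -/
noncomputable def Scount (l m r : ℕ) : ℕ :=
  (Finset.univ.filter fun f : Fin l → Fin m =>
    ∀ v : Fin m, (Finset.univ.filter fun j => f j = v).card ≤ r).card

/-- Refined Singleton bound: `A_H(n,r,d) ≤ S(n-d+1, n/r, r)`. -/
theorem AH_le_Scount (n r d : ℕ) (hn : 0 < n) (hr : 0 < r) (hd : 0 < d)
    (hdvd : r ∣ n) :
    AH n r d ≤ Scount (n - d + 1) (n / r) r := by
  classical
  apply csSup_le'
  rintro M ⟨C, rfl, hreg, hdist⟩
  set m := n / r with hm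
  have hm0 : 0 < m := Nat.div_pos (Nat.le_of_dvd hn hdvd) hr
  set l := n - d + 1 with hl
  have hln : l ≤ n := by omega
  let Φ : (Fin n → ℕ) → (Fin l → Fin m) := fun f j =>
    if h : f (Fin.castLE hln j) < m then ⟨f (Fin.castLE hln j), h⟩ else ⟨0, hm0⟩
  have hΦval : ∀ f ∈ C, ∀ j : Fin l, (Φ f j : ℕ) = f (Fin.castLE hln j) := by
    intro f hf j
    simp only [Φ, dif_pos (show f (Fin.castLE hln j) < m from (hreg f hf).1 (Fin.castLE hln j))]
  apply Finset.card_le_card_of_injOn Φ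
  · intro f hf
    simp only [Scount, Finset.mem_coe, Finset.mem_filter, Finset.mem_univ, true_and]
    intro v
    calc (Finset.univ.filter fun j => Φ f j = v).card
        ≤ (Finset.univ.filter fun j : Fin n => f j = (v : ℕ)).card := by
          apply Finset.card_le_card_of_injOn (Fin.castLE hln)
          · intro j hj
            simp only [Finset.mem_coe, Finset.mem_filter, Finset.mem_univ, true_and] at hj ⊢
            rw [← hΦval f hf j, hj]
          · intro a _ b _ hab
            exact Fin.castLE_injective hln hab
      _ = r := (hreg f hf).2 (v : ℕ) v.isLt
  · intro f hf g hg hfg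
    by_contra hne
    have hdk := hdist f hf g hg hne
    have hsub : (Finset.univ.filter fun j => f j ≠ g j) ⊆
        Finset.univ.filter fun j : Fin n => l ≤ (j : ℕ) := by
      intro j hj
      simp only [Finset.mem_filter, Finset.mem_univ, true_and] at hj ⊢
      by_contra hjl
      push_neg at hjl
      apply hj
      have hc : Fin.castLE hln (⟨(j : ℕ), hjl⟩ : Fin l) = j := by
        ext; rfl
      have h1 := hΦval f hf ⟨(j : ℕ), hjl⟩
      have h2 := hΦval g hg ⟨(j : ℕ), hjl⟩
      rw [hc] at h1 h2
      rw [← h1, ← h2, hfg]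
    have hcard : (Finset.univ.filter fun j : Fin n => l ≤ (j : ℕ)).card ≤ n - l := by
      have hsum := Finset.card_filter_add_card_filter_not
        (s := (Finset.univ : Finset (Fin n))) (p := fun j : Fin n => l ≤ (j : ℕ))
      have hlo : l ≤ (Finset.univ.filter fun j : Fin n => ¬ l ≤ (j : ℕ)).card := by
        have h2 : ((Finset.univ : Finset (Fin l))).card ≤
            (Finset.univ.filter fun j : Fin n => ¬ l ≤ (j : ℕ)).card := by
          apply Finset.card_le_card_of_injOn (Fin.castLE hln)
          · intro j _
            simp only [Finset.mem_coe, Finset.mem_filter, Finset.mem_univ, true_and, not_le,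
              Fin.coe_castLE]
            exact j.isLt
          · intro a _ b _ hab
            exact Fin.castLE_injective hln hab
        simpa using h2
      simp only [Finset.card_univ, Fintype.card_fin] at hsum
      omega
    have : d ≤ n - l := le_trans hdk (le_trans (Finset.card_le_card hsub) hcard)
    omega
end

section
/- Gilbert–Varshamov bound in the Hamming metric: A_H(n,r,d) ≥ n! / ((r!)^{n/r} · C(n,d-1) · (n/r)^{d-1}), where C(n,d-1) is the binomial coefficient. -/
open Finset


private lemma fiber_card_base {n r : ℕ} (hr : 0 < r) (hdvd : r ∣ n) {i : ℕ} (hi : i < n / r) :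
    ((Finset.univ : Finset (Fin n)).filter fun j : Fin n => (j : ℕ) / r = i).card = r := by
  have hsub : r * i + r ≤ n := by
    have h1 : i + 1 ≤ n / r := hi
    calc r * i + r = r * (i + 1) := by ring
      _ ≤ r * (n / r) := Nat.mul_le_mul_left r h1
      _ = n := Nat.mul_div_cancel' hdvd
  have key : ∀ x : ℕ, x / r = i ↔ r * i ≤ x ∧ x < r * i + r := by
    intro x
    constructor
    · rintro rfl
      refine ⟨by rw [mul_comm]; exact Nat.div_mul_le_self x r, ?_⟩
      conv_lhs => rw [← Nat.div_add_mod x r]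
      exact Nat.add_lt_add_left (Nat.mod_lt x hr) _
    · rintro ⟨h1, h2⟩
      exact Nat.div_eq_of_lt_le (by rw [mul_comm]; exact h1)
        (by rw [add_mul, one_mul, mul_comm]; exact h2)
  have : ((Finset.univ : Finset (Fin n)).filter fun j : Fin n => (j : ℕ) / r = i).card
      = (Finset.Ico (r * i) (r * i + r)).card := by
    refine Finset.card_bij (fun j _ => (j : ℕ)) ?_ ?_ ?_
    · intro j hj
      simp only [mem_filter, mem_univ, true_and] at hj
      rw [Finset.mem_Ico]
      exact (key j).1 hj
    · intro a ha b hb h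
      exact Fin.ext h
    · intro x hx
      rw [Finset.mem_Ico] at hx
      refine ⟨⟨x, lt_of_lt_of_le hx.2 hsub⟩, ?_, rfl⟩
      simp only [mem_filter, mem_univ, true_and]
      exact (key x).2 hx
  rw [this, Nat.card_Ico]
  omega

private lemma card_regular {n r : ℕ} (hn : 0 < n) (hr : 0 < r) (hdvd : r ∣ n)
    (R : Finset (Fin n → ℕ)) (hR : ∀ f, f ∈ R ↔ IsRegularM n r f) :
    R.card * (Nat.factorial r) ^ (n / r) = Nat.factorial n := by
  classical
  set m := n / r with hm_def
  have hm : 0 < m := Nat.div_pos (Nat.le_of_dvd hn hdvd) hr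
  -- base regular function valued in Fin m
  have hval : ∀ j : Fin n, (j : ℕ) / r < m := by
    intro j
    rw [hm_def, Nat.div_lt_iff_lt_mul hr, Nat.div_mul_cancel hdvd]
    exact j.isLt
  set g0 : Fin n → Fin m := fun j => ⟨(j : ℕ) / r, hval j⟩ with hg0
  set coe : (Fin n → Fin m) → (Fin n → ℕ) := fun f j => (f j : ℕ) with hcoe
  have hcoe_inj : Function.Injective coe := fun f g h =>
    funext fun j => Fin.ext (congrFun h j)
  set Reg : Finset (Fin n → Fin m) :=
    univ.filter fun f => ∀ i : Fin m, (univ.filter fun j => f j = i).card = r with hReg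
  -- R is the image of Reg under coe
  have himage : R = Reg.image coe := by
    ext f
    rw [hR, Finset.mem_image]
    constructor
    · rintro ⟨h1, h2⟩
      refine ⟨fun j => ⟨f j, h1 j⟩, ?_, rfl⟩
      rw [hReg, mem_filter]
      refine ⟨mem_univ _, fun i => ?_⟩
      have : (univ.filter fun j : Fin n => (⟨f j, h1 j⟩ : Fin m) = i)
          = (univ.filter fun j : Fin n => f j = (i : ℕ)) := by
        apply Finset.filter_congr
        intro j _
        simp [Fin.ext_iff]
      rw [this]
      exact h2 i i.isLt
    · rintro ⟨f', hf', rfl⟩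
      rw [hReg, mem_filter] at hf'
      refine ⟨fun j => (f' j).isLt, fun i hi => ?_⟩
      have : (univ.filter fun j : Fin n => (f' j : ℕ) = i)
          = (univ.filter fun j : Fin n => f' j = (⟨i, hi⟩ : Fin m)) := by
        apply Finset.filter_congr
        intro j _
        simp [Fin.ext_iff]
      rw [hcoe]
      simp only []
      rw [this]
      exact hf'.2 ⟨i, hi⟩
  have hcard_eq : R.card = Reg.card := by
    rw [himage, Finset.card_image_of_injective _ hcoe_inj]
  -- fibers of g0 have card r
  have hg0fib : ∀ i : Fin m, (univ.filter fun j => g0 j = i).card = r := by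
    intro i
    have : (univ.filter fun j : Fin n => g0 j = i)
        = (univ.filter fun j : Fin n => (j : ℕ) / r = (i : ℕ)) := by
      apply Finset.filter_congr
      intro j _
      simp [hg0, Fin.ext_iff]
    rw [this]
    exact fiber_card_base hr hdvd i.isLt
  -- every g0 ∘ σ is in Reg
  have hmem : ∀ σ : Equiv.Perm (Fin n), g0 ∘ σ ∈ Reg := by
    intro σ
    rw [hReg, mem_filter]
    refine ⟨mem_univ _, fun i => ?_⟩
    have : (univ.filter fun j : Fin n => g0 (σ j) = i).card
        = (univ.filter fun j : Fin n => g0 j = i).card := by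
      refine Finset.card_nbij' (fun j => σ j) (fun j => σ.symm j) ?_ ?_ ?_ ?_
      · intro j hj
        simp only [Finset.mem_coe, mem_filter, mem_univ, true_and] at hj ⊢
        exact hj
      · intro j hj
        simp only [Finset.mem_coe, mem_filter, mem_univ, true_and] at hj ⊢
        rw [Equiv.apply_symm_apply]
        exact hj
      · intro j _; exact σ.symm_apply_apply j
      · intro j _; exact σ.apply_symm_apply j
    have hc : (univ.filter fun j : Fin n => (g0 ∘ σ) j = i)
        = (univ.filter fun j : Fin n => g0 (σ j) = i) := rfl
    rw [hc, this]
    exact hg0fib i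
  -- every element of Reg is of the form g0 ∘ σ
  have hsurj : ∀ f ∈ Reg, ∃ σ : Equiv.Perm (Fin n), g0 ∘ σ = f := by
    intro f hf
    rw [hReg, mem_filter] at hf
    have hcards : ∀ i : Fin m,
        Fintype.card {j // f j = i} = Fintype.card {j // g0 j = i} := by
      intro i
      rw [Fintype.card_subtype, Fintype.card_subtype, hf.2 i, hg0fib i]
    let e : ∀ i : Fin m, {j // f j = i} ≃ {j // g0 j = i} :=
      fun i => Fintype.equivOfCardEq (hcards i)
    refine ⟨(((Equiv.sigmaFiberEquiv f).symm.trans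
      (Equiv.sigmaCongrRight e)).trans (Equiv.sigmaFiberEquiv g0)), ?_⟩
    funext j
    exact (e (f j) ⟨j, rfl⟩).2
  -- count
  have hfact : (Finset.univ : Finset (Equiv.Perm (Fin n))).card = Nat.factorial n := by
    rw [Finset.card_univ, Fintype.card_perm, Fintype.card_fin]
  have hfiber : ∀ g ∈ Reg,
      (univ.filter fun σ : Equiv.Perm (Fin n) => g0 ∘ σ = g).card
        = (Nat.factorial r) ^ m := by
    intro g hg
    obtain ⟨σ0, hσ0⟩ := hsurj g hg
    have hbij : (univ.filter fun σ : Equiv.Perm (Fin n) => g0 ∘ σ = g).card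
        = (univ.filter fun τ : Equiv.Perm (Fin n) => g0 ∘ τ = g0).card := by
      refine Finset.card_nbij' (fun σ => σ * σ0⁻¹) (fun τ => τ * σ0) ?_ ?_ ?_ ?_
      · intro σ hσ
        simp only [Finset.mem_coe, mem_filter, mem_univ, true_and] at hσ ⊢
        funext x
        have h1 : g0 (σ (σ0⁻¹ x)) = g (σ0⁻¹ x) := congrFun hσ (σ0⁻¹ x)
        have h2 : g (σ0⁻¹ x) = g0 (σ0 (σ0⁻¹ x)) := (congrFun hσ0 (σ0⁻¹ x)).symm
        calc g0 ((σ * σ0⁻¹) x) = g0 (σ (σ0⁻¹ x)) := rfl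
          _ = g0 (σ0 (σ0⁻¹ x)) := h1.trans h2
          _ = g0 x := by rw [Equiv.Perm.inv_def, Equiv.apply_symm_apply]
      · intro τ hτ
        simp only [Finset.mem_coe, mem_filter, mem_univ, true_and] at hτ ⊢
        funext x
        calc g0 ((τ * σ0) x) = g0 (τ (σ0 x)) := rfl
          _ = g0 (σ0 x) := congrFun hτ (σ0 x)
          _ = g x := congrFun hσ0 x
      · intro σ _
        simp [mul_assoc]
      · intro τ _
        simp [mul_assoc]
    rw [hbij]
    have hstab : (univ.filter fun τ : Equiv.Perm (Fin n) => g0 ∘ τ = g0).card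
        = Fintype.card {τ : Equiv.Perm (Fin n) // g0 ∘ τ = g0} :=
      (Fintype.card_subtype _).symm
    rw [hstab, DomMulAct.stabilizer_card]
    have : ∀ i : Fin m, Fintype.card {a // g0 a = i} = r := by
      intro i
      rw [Fintype.card_subtype]
      exact hg0fib i
    calc (∏ i : Fin m, (Fintype.card {a // g0 a = i}).factorial)
        = ∏ _i : Fin m, (Nat.factorial r) := by
          apply Finset.prod_congr rfl
          intro i _
          rw [this i]
      _ = (Nat.factorial r) ^ m := by
          rw [Finset.prod_const, Finset.card_univ, Fintype.card_fin]
  have hsum := Finset.card_eq_sum_card_fiberwise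
    (f := fun σ : Equiv.Perm (Fin n) => g0 ∘ σ) (s := univ) (t := Reg)
    (fun σ _ => hmem σ)
  rw [hfact] at hsum
  rw [hcard_eq]
  rw [hsum, Finset.sum_congr rfl hfiber, Finset.sum_const, smul_eq_mul]

private lemma ball_card {n q e : ℕ} (he : e ≤ n) (R : Finset (Fin n → ℕ))
    (hRv : ∀ f ∈ R, ∀ j, f j < q) (g : Fin n → ℕ) :
    (R.filter fun f => hammF n f g ≤ e).card ≤ Nat.choose n e * q ^ e := by
  classical
  set T : Finset ((S : Finset (Fin n)) × (∀ j ∈ S, ℕ)) :=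
    ((univ : Finset (Fin n)).powersetCard e).sigma
      (fun S => S.pi fun _ => Finset.range q) with hT
  have hTcard : T.card = Nat.choose n e * q ^ e := by
    rw [hT, Finset.card_sigma]
    have : ∀ S ∈ (univ : Finset (Fin n)).powersetCard e,
        (S.pi fun _ => Finset.range q).card = q ^ e := by
      intro S hS
      rw [Finset.mem_powersetCard] at hS
      rw [Finset.card_pi]
      simp only [Finset.card_range]
      rw [Finset.prod_const, hS.2]
    rw [Finset.sum_congr rfl this, Finset.sum_const, smul_eq_mul,
      Finset.card_powersetCard, Finset.card_univ, Fintype.card_fin]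
  rw [← hTcard]
  -- selection function: pad the disagreement set to size e
  have hsel : ∀ f : Fin n → ℕ, (univ.filter fun j => f j ≠ g j).card ≤ e →
      ∃ S : Finset (Fin n), (univ.filter fun j => f j ≠ g j) ⊆ S ∧ S.card = e := by
    intro f hf
    obtain ⟨u, h1, _, h3⟩ := Finset.exists_subsuperset_card_eq
      (Finset.subset_univ (univ.filter fun j => f j ≠ g j)) hf
      (by rw [Finset.card_univ, Fintype.card_fin]; exact he)
    exact ⟨u, h1, h3⟩
  set sel : (Fin n → ℕ) → Finset (Fin n) := fun f =>
    if h : (univ.filter fun j => f j ≠ g j).card ≤ e then (hsel f h).choose else ∅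
    with hsel_def
  have hsel_spec : ∀ f : Fin n → ℕ, (univ.filter fun j => f j ≠ g j).card ≤ e →
      (univ.filter fun j => f j ≠ g j) ⊆ sel f ∧ (sel f).card = e := by
    intro f h
    rw [hsel_def]
    simp only [dif_pos h]
    exact (hsel f h).choose_spec
  refine Finset.card_le_card_of_injOn
    (fun f => ⟨sel f, fun j _ => f j⟩) ?_ ?_
  · intro f hf
    rw [Finset.mem_coe, Finset.mem_filter] at hf
    obtain ⟨hfR, hfd⟩ := hf
    obtain ⟨hsub, hcard⟩ := hsel_spec f hfd
    rw [Finset.mem_coe, hT, Finset.mem_sigma]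
    constructor
    · rw [Finset.mem_powersetCard]
      exact ⟨Finset.subset_univ _, hcard⟩
    · rw [Finset.mem_pi]
      intro j _
      rw [Finset.mem_range]
      exact hRv f hfR j
  · intro f1 hf1 f2 hf2 h
    simp only [Finset.coe_filter, Set.mem_setOf_eq] at hf1 hf2
    rw [Sigma.mk.inj_iff] at h
    obtain ⟨h1, h2⟩ := h
    rw [h1] at h2
    have h2' := heq_iff_eq.mp h2
    obtain ⟨hsub1, _⟩ := hsel_spec f1 hf1.2
    obtain ⟨hsub2, _⟩ := hsel_spec f2 hf2.2
    funext j
    by_cases hj : j ∈ sel f2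
    · exact congrFun (congrFun h2' j) hj
    · have hj1 : j ∉ (univ.filter fun i => f1 i ≠ g i) := fun hc => hj (h1 ▸ hsub1 hc)
      have hj2 : j ∉ (univ.filter fun i => f2 i ≠ g i) := fun hc => hj (hsub2 hc)
      simp only [Finset.mem_filter, mem_univ, true_and, not_not] at hj1 hj2
      rw [hj1, hj2]

/-- Gilbert–Varshamov bound in the Hamming metric:
`A_H(n,r,d) ≥ n! / ((r!)^{n/r} · C(n,d-1) · (n/r)^{d-1})`, stated in
cross-multiplied form. -/
theorem AH_gilbert_varshamov (n r d : ℕ) (hn : 0 < n) (hr : 0 < r) (hd : 0 < d)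
    (hdn : d ≤ n) (hdvd : r ∣ n) :
    Nat.factorial n ≤
      AH n r d * ((Nat.factorial r) ^ (n / r) * Nat.choose n (d - 1) * (n / r) ^ (d - 1)) := by
  classical
  -- the finset of all regular multipermutations
  set R : Finset (Fin n → ℕ) :=
    ((Finset.univ : Finset (Fin n → Fin (n / r))).image
      (fun f j => ((f j : ℕ)))).filter (fun f => IsRegularM n r f) with hRdef
  have hm : 0 < n / r := Nat.div_pos (Nat.le_of_dvd hn hdvd) hr
  have hR : ∀ f, f ∈ R ↔ IsRegularM n r f := by
    intro f
    rw [hRdef, Finset.mem_filter]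
    constructor
    · exact fun h => h.2
    · intro h
      refine ⟨Finset.mem_image.mpr ⟨fun j => ⟨f j, h.1 j⟩, Finset.mem_univ _, rfl⟩, h⟩
  -- the code set
  set 𝒮 : Set ℕ := {M | ∃ C : Finset (Fin n → ℕ), C.card = M ∧ (∀ f ∈ C, IsRegularM n r f) ∧
    ∀ f ∈ C, ∀ g ∈ C, f ≠ g → d ≤ hammF n f g} with hS
  have h0 : 0 ∈ 𝒮 := ⟨∅, by simp⟩
  have hbdd : BddAbove 𝒮 := by
    refine ⟨R.card, fun M hM => ?_⟩
    obtain ⟨C, hM, hreg, _⟩ := hM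
    rw [← hM]
    exact Finset.card_le_card fun f hf => (hR f).mpr (hreg f hf)
  have hAHmem : AH n r d ∈ 𝒮 := Nat.sSup_mem ⟨0, h0⟩ hbdd
  obtain ⟨C, hCcard, hCreg, hCdist⟩ := hAHmem
  -- covering property of the maximal code
  have hcover : ∀ f ∈ R, ∃ g ∈ C, hammF n f g ≤ d - 1 := by
    intro f hf
    by_contra hc
    push_neg at hc
    have hfar : ∀ g ∈ C, d ≤ hammF n f g := by
      intro g hg
      have := hc g hg
      omega
    have hfC : f ∉ C := by
      intro hfc
      have := hfar f hfc
      have hzero : hammF n f f = 0 := by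
        simp [hammF]
      omega
    have hsymm : ∀ g : Fin n → ℕ, hammF n g f = hammF n f g := by
      intro g
      unfold hammF
      congr 1
      apply Finset.filter_congr
      intro j _
      exact ne_comm
    have hnew : AH n r d + 1 ∈ 𝒮 := by
      refine ⟨insert f C, ?_, ?_, ?_⟩
      · rw [Finset.card_insert_of_notMem hfC, hCcard]
      · intro g hg
        rcases Finset.mem_insert.mp hg with h | h
        · exact h ▸ (hR f).mp hf
        · exact hCreg g h
      · intro g1 hg1 g2 hg2 hne
        rcases Finset.mem_insert.mp hg1 with h1 | h1 <;>
          rcases Finset.mem_insert.mp hg2 with h2 | h2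
        · exact absurd (h1.trans h2.symm) hne
        · exact h1 ▸ hfar g2 h2
        · rw [h2, hsymm g1]
          exact hfar g1 h1
        · exact hCdist g1 h1 g2 h2 hne
    have h1 := le_csSup hbdd hnew
    have h2 : AH n r d = sSup 𝒮 := rfl
    omega
  -- R is covered by balls around codewords
  have hRsub : R ⊆ C.biUnion (fun g => R.filter fun f => hammF n f g ≤ d - 1) := by
    intro f hf
    obtain ⟨g, hg, hdist⟩ := hcover f hf
    exact Finset.mem_biUnion.mpr ⟨g, hg, Finset.mem_filter.mpr ⟨hf, hdist⟩⟩
  have hballs : ∀ g : Fin n → ℕ,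
      (R.filter fun f => hammF n f g ≤ d - 1).card ≤
        Nat.choose n (d - 1) * (n / r) ^ (d - 1) :=
    fun g => ball_card (by omega) R (fun f hf j => ((hR f).mp hf).1 j) g
  have hRcard : R.card ≤ AH n r d * (Nat.choose n (d - 1) * (n / r) ^ (d - 1)) := by
    calc R.card ≤ (C.biUnion (fun g => R.filter fun f => hammF n f g ≤ d - 1)).card :=
          Finset.card_le_card hRsub
      _ ≤ ∑ g ∈ C, (R.filter fun f => hammF n f g ≤ d - 1).card :=
          Finset.card_biUnion_le
      _ ≤ ∑ _g ∈ C, Nat.choose n (d - 1) * (n / r) ^ (d - 1) :=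
          Finset.sum_le_sum (fun g _ => hballs g)
      _ = AH n r d * (Nat.choose n (d - 1) * (n / r) ^ (d - 1)) := by
          rw [Finset.sum_const, smul_eq_mul, hCcard]
  calc Nat.factorial n = R.card * (Nat.factorial r) ^ (n / r) :=
        (card_regular hn hr hdvd R hR).symm
    _ ≤ (AH n r d * (Nat.choose n (d - 1) * (n / r) ^ (d - 1))) * (Nat.factorial r) ^ (n / r) :=
        Nat.mul_le_mul_right _ hRcard
    _ = AH n r d * ((Nat.factorial r) ^ (n / r) * Nat.choose n (d - 1) * (n / r) ^ (d - 1)) := by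
        ring
end

section
/- The size of a Hamming ball of radius u in the space of r-regular multipermutations of length n is at most C(n,u)·(n/r)^u. -/
/-- The size of a Hamming ball of radius `u` in the space of `r`-regular
multipermutations of length `n` is at most `C(n,u)·(n/r)^u`. -/
theorem multiperm_hamming_ball_bound (n r u : ℕ) (hn : 0 < n) (hr : 0 < r)
    (hdvd : r ∣ n) (hu : u ≤ n) (m0 : Fin n → ℕ) (hm0 : IsRegularM n r m0) :
    Nat.card {f : Fin n → ℕ // IsRegularM n r f ∧ hammF n f m0 ≤ u} ≤
      Nat.choose n u * (n / r) ^ u := by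
  classical
  set T : Finset (Fin n → ℕ) :=
    (Finset.univ.powersetCard u).biUnion (fun S =>
      Fintype.piFinset (fun j => if j ∈ S then Finset.range (n / r) else {m0 j})) with hT
  have hsub : {f : Fin n → ℕ | IsRegularM n r f ∧ hammF n f m0 ≤ u} ⊆ ↑T := by
    intro f ⟨hreg, hball⟩
    set D := Finset.univ.filter fun j => f j ≠ m0 j with hD
    obtain ⟨S, hDS, _, hScard⟩ := Finset.exists_subsuperset_card_eq
      (D.subset_univ) hball (by simpa using hu)
    simp only [hT, Finset.coe_biUnion, Set.mem_iUnion, Finset.mem_coe]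
    refine ⟨S, by simp [Finset.mem_powersetCard, hScard], ?_⟩
    rw [Fintype.mem_piFinset]
    intro j
    by_cases hj : j ∈ S
    · simp [hj, hreg.1 j]
    · have : f j = m0 j := by
        by_contra hne
        exact hj (hDS (by simp [hD, hne]))
      simp [hj, this]
  have hfin : {f : Fin n → ℕ | IsRegularM n r f ∧ hammF n f m0 ≤ u}.Finite :=
    Set.Finite.subset T.finite_toSet hsub
  have h1 : Nat.card {f : Fin n → ℕ // IsRegularM n r f ∧ hammF n f m0 ≤ u}
      = {f : Fin n → ℕ | IsRegularM n r f ∧ hammF n f m0 ≤ u}.ncard := rfl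
  rw [h1]
  have h2 : {f : Fin n → ℕ | IsRegularM n r f ∧ hammF n f m0 ≤ u}.ncard ≤ T.card := by
    rw [← Set.ncard_coe_finset]
    exact Set.ncard_le_ncard hsub T.finite_toSet
  refine h2.trans ?_
  refine (Finset.card_biUnion_le).trans ?_
  have hcard : ∀ S ∈ Finset.univ.powersetCard u,
      (Fintype.piFinset (fun j => if j ∈ S then Finset.range (n / r) else {m0 j})).card
        = (n / r) ^ u := by
    intro S hS
    rw [Finset.mem_powersetCard] at hS
    rw [Fintype.card_piFinset]
    calc ∏ j, (if j ∈ S then Finset.range (n / r) else {m0 j}).card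
        = ∏ j, (if j ∈ S then n / r else 1) := by
          apply Finset.prod_congr rfl; intro j _; split <;> simp
      _ = ∏ j ∈ Finset.univ ∩ S, (n / r) := Finset.prod_ite_mem _ _ _
      _ = ∏ j ∈ S, (n / r) := by rw [Finset.univ_inter]
      _ = (n / r) ^ u := by rw [Finset.prod_const, hS.2]
  rw [Finset.sum_congr rfl hcard, Finset.sum_const, Finset.card_powersetCard,
    Finset.card_univ, Fintype.card_fin, smul_eq_mul]
end

section
/- The ball of radius u in S_n under the r-regular Ulam distance satisfies |B^r_∘(u)| ≤ (r!)^{2n/r} · |B^1_∘(u)|, where B^r_∘(u) = {π ∈ S_n : d_∘^r(π, e) ≤ u} and B^1_∘(u) is the ordinary Ulam ball of radius u around the identity. -/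
/- ===================== auxiliary lemmas ===================== -/

lemma lcsLen_map {α β : Type*} {g : α → β} (hg : Function.Injective g) (A B : List α) :
    lcsLen (A.map g) (B.map g) = lcsLen A B := by
  unfold lcsLen
  congr 1
  ext k
  constructor
  · rintro ⟨l, hlen, hA, hB⟩
    obtain ⟨lA, hlA, rfl⟩ := List.sublist_map_iff.mp hA
    obtain ⟨lB, hlB, hEq⟩ := List.sublist_map_iff.mp hB
    have hAB : lA = lB := List.map_injective_iff.mpr hg hEq
    exact ⟨lA, by simpa using hlen, hlA, hAB ▸ hlB⟩
  · rintro ⟨l, hlen, hA, hB⟩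
    exact ⟨l.map g, by simpa using hlen, hA.map g, hB.map g⟩

lemma ulam_left_inv (n : ℕ) (ρ π σ : Equiv.Perm (Fin n)) :
    ulam n (ρ * π) (ρ * σ) = ulam n π σ := by
  unfold ulam
  congr 1
  have h1 : List.ofFn ⇑(ρ * π) = (List.ofFn ⇑π).map ⇑ρ := by
    rw [List.map_ofFn]; rfl
  have h2 : List.ofFn ⇑(ρ * σ) = (List.ofFn ⇑σ).map ⇑ρ := by
    rw [List.map_ofFn]; rfl
  rw [h1, h2, lcsLen_map ρ.injective]

lemma mp_quot (n r : ℕ) (π₀ π : Equiv.Perm (Fin n)) (h : mp n r π = mp n r π₀) :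
    mp n r (π₀⁻¹ * π) = mp n r 1 := by
  funext j
  have h1 : (π₀⁻¹ * π).symm j = π.symm (π₀ j) := rfl
  have h2 := congrFun h (π₀ j)
  simp only [mp] at h2 ⊢
  rw [h1, h2]
  simp
  rfl

lemma mp_apply_div (n r : ℕ) (τ : Equiv.Perm (Fin n)) (hτ : mp n r τ = mp n r 1)
    (j : Fin n) : ((τ j : ℕ)) / r = (j : ℕ) / r := by
  have := congrFun hτ (τ j)
  simp only [mp, Equiv.symm_apply_apply, Equiv.Perm.one_def, Equiv.refl_symm,
    Equiv.refl_apply] at this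
  exact this.symm

/-- Cardinality bound for the block-preserving subgroup. -/
lemma card_mp_eq_one (n r : ℕ) (hr : 0 < r) (hdvd : r ∣ n) :
    Nat.card {τ : Equiv.Perm (Fin n) // mp n r τ = mp n r 1} ≤
      (Nat.factorial r) ^ (n / r) := by
  have hnn : (n / r) * r = n := Nat.div_mul_cancel hdvd
  have hidx : ∀ (i : Fin (n / r)) (k : Fin r), (i : ℕ) * r + (k : ℕ) < n := by
    intro i k
    calc (i : ℕ) * r + (k : ℕ) < ((i : ℕ) + 1) * r := by
          rw [add_mul, one_mul]; exact Nat.add_lt_add_left k.isLt _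
      _ ≤ (n / r) * r := Nat.mul_le_mul_right r i.isLt
      _ = n := hnn
  have hdivblk : ∀ (i : Fin (n / r)) (k : Fin r), ((i : ℕ) * r + (k : ℕ)) / r = (i : ℕ) := by
    intro i k
    rw [mul_comm, Nat.mul_add_div hr, Nat.div_eq_of_lt k.isLt, add_zero]
  -- the block component map is injective on each block
  have hblk : ∀ (τ : {τ : Equiv.Perm (Fin n) // mp n r τ = mp n r 1}) (i : Fin (n / r)),
      Function.Injective (fun k : Fin r =>
        (⟨(τ.1 ⟨(i : ℕ) * r + (k : ℕ), hidx i k⟩ : ℕ) % r, Nat.mod_lt _ hr⟩ : Fin r)) := by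
    intro τ i k₁ k₂ hEq
    have hmod : (τ.1 ⟨(i : ℕ) * r + (k₁ : ℕ), hidx i k₁⟩ : ℕ) % r
        = (τ.1 ⟨(i : ℕ) * r + (k₂ : ℕ), hidx i k₂⟩ : ℕ) % r := congrArg Fin.val hEq
    have hd : ∀ k : Fin r, (τ.1 ⟨(i : ℕ) * r + (k : ℕ), hidx i k⟩ : ℕ) / r = (i : ℕ) := by
      intro k
      rw [mp_apply_div n r τ.1 τ.2]
      exact hdivblk i k
    have hτeq : (τ.1 ⟨(i : ℕ) * r + (k₁ : ℕ), hidx i k₁⟩ : ℕ)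
        = (τ.1 ⟨(i : ℕ) * r + (k₂ : ℕ), hidx i k₂⟩ : ℕ) := by
      conv_lhs => rw [← Nat.div_add_mod (τ.1 ⟨(i : ℕ) * r + (k₁ : ℕ), hidx i k₁⟩ : ℕ) r]
      conv_rhs => rw [← Nat.div_add_mod (τ.1 ⟨(i : ℕ) * r + (k₂ : ℕ), hidx i k₂⟩ : ℕ) r]
      rw [hd k₁, hd k₂, hmod]
    have := τ.1.injective (Fin.ext hτeq)
    have : (i : ℕ) * r + (k₁ : ℕ) = (i : ℕ) * r + (k₂ : ℕ) := congrArg Fin.val this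
    exact Fin.ext (by omega)
  set Φ : {τ : Equiv.Perm (Fin n) // mp n r τ = mp n r 1} →
      (Fin (n / r) → Equiv.Perm (Fin r)) := fun τ i =>
    Equiv.ofBijective _ (Finite.injective_iff_bijective.mp (hblk τ i)) with hΦ
  have hΦinj : Function.Injective Φ := by
    intro τ₁ τ₂ hEq
    ext j
    have hjlt : (j : ℕ) / r < n / r := Nat.div_lt_div_of_lt_of_dvd hdvd j.isLt
    have hjr : (j : ℕ) % r < r := Nat.mod_lt _ hr
    have hpermeq : Φ τ₁ ⟨(j : ℕ) / r, hjlt⟩ = Φ τ₂ ⟨(j : ℕ) / r, hjlt⟩ :=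
      congrFun hEq ⟨(j : ℕ) / r, hjlt⟩
    have hfun := DFunLike.congr_fun hpermeq ⟨(j : ℕ) % r, hjr⟩
    simp only [hΦ, Equiv.ofBijective_apply] at hfun
    have hfin : (⟨((j : ℕ) / r) * r + (j : ℕ) % r,
        hidx ⟨(j : ℕ) / r, hjlt⟩ ⟨(j : ℕ) % r, hjr⟩⟩ : Fin n) = j := by
      apply Fin.ext
      simp only
      rw [mul_comm]
      exact Nat.div_add_mod _ _
    rw [hfin] at hfun
    have hmod : (τ₁.1 j : ℕ) % r = (τ₂.1 j : ℕ) % r := congrArg Fin.val hfun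
    show (τ₁.1 j : ℕ) = (τ₂.1 j : ℕ)
    conv_lhs => rw [← Nat.div_add_mod (τ₁.1 j : ℕ) r]
    conv_rhs => rw [← Nat.div_add_mod (τ₂.1 j : ℕ) r]
    rw [mp_apply_div n r τ₁.1 τ₁.2 j, mp_apply_div n r τ₂.1 τ₂.2 j, hmod]
  calc Nat.card {τ : Equiv.Perm (Fin n) // mp n r τ = mp n r 1}
      ≤ Nat.card (Fin (n / r) → Equiv.Perm (Fin r)) :=
        Nat.card_le_card_of_injective Φ hΦinj
    _ = (Nat.factorial r) ^ (n / r) := by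
        rw [Nat.card_fun, Nat.card_eq_fintype_card (α := Equiv.Perm (Fin r)),
          Nat.card_eq_fintype_card (α := Fin (n / r)), Fintype.card_perm, Fintype.card_fin,
          Fintype.card_fin]

/-- The ball of radius `u` in `S_n` under the `r`-regular Ulam distance is at most
`(r!)^{2n/r}` times larger than the ordinary Ulam ball of radius `u` around the
identity. -/
theorem ulamR_ball_le (n r u : ℕ) (hn : 0 < n) (hr : 0 < r) (hdvd : r ∣ n) :
    Nat.card {π : Equiv.Perm (Fin n) // ulamR n r π 1 ≤ u} ≤
      (Nat.factorial r) ^ (2 * (n / r)) *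
        Nat.card {π : Equiv.Perm (Fin n) // ulam n π 1 ≤ u} := by
  classical
  -- witness extraction
  have key : ∀ π : {π : Equiv.Perm (Fin n) // ulamR n r π 1 ≤ u},
      ∃ p : Equiv.Perm (Fin n) × Equiv.Perm (Fin n),
        mp n r p.1 = mp n r π.1 ∧ mp n r p.2 = mp n r 1 ∧ ulam n p.1 p.2 ≤ u := by
    rintro ⟨π, hπ⟩
    have hne : {k | ∃ π' σ' : Equiv.Perm (Fin n),
        mp n r π' = mp n r π ∧ mp n r σ' = mp n r 1 ∧ k = ulam n π' σ'}.Nonempty :=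
      ⟨ulam n π 1, π, 1, rfl, rfl, rfl⟩
    obtain ⟨π', σ', h1, h2, h3⟩ := Nat.sInf_mem hne
    exact ⟨(π', σ'), h1, h2, by rw [← h3]; exact hπ⟩
  choose w hw1 hw2 hw3 using key
  -- the injection into H × H × Ball₁
  set F : {π : Equiv.Perm (Fin n) // ulamR n r π 1 ≤ u} →
      ({τ : Equiv.Perm (Fin n) // mp n r τ = mp n r 1} ×
       {τ : Equiv.Perm (Fin n) // mp n r τ = mp n r 1} ×
       {π : Equiv.Perm (Fin n) // ulam n π 1 ≤ u}) := fun π =>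
    (⟨(w π).2, hw2 π⟩,
     ⟨(w π).1⁻¹ * π.1, mp_quot n r (w π).1 π.1 (hw1 π).symm⟩,
     ⟨(w π).2⁻¹ * (w π).1, by
        have : ulam n ((w π).2⁻¹ * (w π).1) 1 = ulam n (w π).1 (w π).2 := by
          conv_lhs => rw [show (1 : Equiv.Perm (Fin n)) = (w π).2⁻¹ * (w π).2 by group]
          exact ulam_left_inv n (w π).2⁻¹ (w π).1 (w π).2
        rw [this]; exact hw3 π⟩) with hF
  have hFinj : Function.Injective F := by
    intro π₁ π₂ hEq
    simp only [hF, Prod.mk.injEq, Subtype.mk.injEq] at hEq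
    obtain ⟨e1, e2, e3⟩ := hEq
    apply Subtype.ext
    have h1 : π₁.1 = (w π₁).2 * ((w π₁).2⁻¹ * (w π₁).1) * ((w π₁).1⁻¹ * π₁.1) := by group
    have h2 : π₂.1 = (w π₂).2 * ((w π₂).2⁻¹ * (w π₂).1) * ((w π₂).1⁻¹ * π₂.1) := by group
    rw [h1, h2, e2, e3, e1]
  calc Nat.card {π : Equiv.Perm (Fin n) // ulamR n r π 1 ≤ u}
      ≤ Nat.card ({τ : Equiv.Perm (Fin n) // mp n r τ = mp n r 1} ×
          {τ : Equiv.Perm (Fin n) // mp n r τ = mp n r 1} ×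
          {π : Equiv.Perm (Fin n) // ulam n π 1 ≤ u}) :=
        Nat.card_le_card_of_injective F hFinj
    _ = Nat.card {τ : Equiv.Perm (Fin n) // mp n r τ = mp n r 1} *
        (Nat.card {τ : Equiv.Perm (Fin n) // mp n r τ = mp n r 1} *
          Nat.card {π : Equiv.Perm (Fin n) // ulam n π 1 ≤ u}) := by
        rw [Nat.card_prod, Nat.card_prod]
    _ ≤ (Nat.factorial r) ^ (n / r) * ((Nat.factorial r) ^ (n / r) *
          Nat.card {π : Equiv.Perm (Fin n) // ulam n π 1 ≤ u}) := by
        exact Nat.mul_le_mul (card_mp_eq_one n r hr hdvd)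
          (Nat.mul_le_mul_right _ (card_mp_eq_one n r hr hdvd))
    _ = (Nat.factorial r) ^ (2 * (n / r)) *
          Nat.card {π : Equiv.Perm (Fin n) // ulam n π 1 ≤ u} := by
        rw [← mul_assoc, ← pow_add, two_mul]
end

section
/- Gilbert–Varshamov bound in the Ulam metric: A_∘(n,r,d) ≥ (n-d+1)! / (C(n,d-1) · (r!)^{2n/r}), for positive integers n, r, d with r | n. -/
/-- `AU n r d` : the maximum number of equivalence classes in an `r`-regular
multipermutation code of length `n` with minimum `r`-regular Ulam distance `d`
(codes are represented by sets of pairwise `≢_r` class representatives). -/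
noncomputable def AU (n r d : ℕ) : ℕ :=
  sSup {M | ∃ C : Finset (Equiv.Perm (Fin n)), C.card = M ∧
    ∀ π ∈ C, ∀ σ ∈ C, π ≠ σ → mp n r π ≠ mp n r σ ∧ d ≤ ulamR n r π σ}


open List in
lemma GV.filter_mem_of_sublist {α : Type*} [DecidableEq α] :
    ∀ {B : List α} {l : List α}, B.Nodup → l <+ B → B.filter (· ∈ l) = l := by
  intro B
  induction B with
  | nil => intro l _ h; simpa using List.sublist_nil.mp h
  | cons b t ih =>
    intro l hnd hsub
    rcases List.sublist_cons_iff.mp hsub with h | ⟨r, rfl, hr⟩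
    · have hb : b ∉ l := fun hbl => (List.nodup_cons.mp hnd).1 (h.subset hbl)
      rw [List.filter_cons]
      simp only [hb, decide_eq_true_eq, if_neg]
      exact ih (List.nodup_cons.mp hnd).2 h
    · rw [List.filter_cons]
      have hbm : b ∈ b :: r := List.mem_cons_self
      rw [if_pos (by simpa using hbm)]
      congr 1
      have hcong : t.filter (fun x => decide (x ∈ b :: r)) = t.filter (fun x => decide (x ∈ r)) := by
        apply List.filter_congr
        intro x hx
        have hxb : x ≠ b := fun h => (List.nodup_cons.mp hnd).1 (h ▸ hx)
        simp [List.mem_cons, hxb]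
      rw [show (fun x => decide (x ∈ b :: r)) = (fun x => decide (x ∈ (b :: r : List α))) from rfl] at *
      rw [hcong]
      exact ih (List.nodup_cons.mp hnd).2 hr

open List in
lemma GV.eq_of_sublist_indexOf {α : Type*} [DecidableEq α] :
    ∀ (B₁ B₂ l : List α), B₁.Nodup → B₂.Nodup → l <+ B₁ → l <+ B₂ →
      B₁ ~ B₂ → (∀ x ∈ B₁, x ∉ l → B₁.idxOf x = B₂.idxOf x) → B₁ = B₂ := by
  intro B₁
  induction B₁ with
  | nil =>
    intro B₂ l _ _ _ _ hp _
    exact (hp.symm.eq_nil).symm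
  | cons a t₁ ih =>
    intro B₂ l hnd₁ hnd₂ hs₁ hs₂ hp hidx
    have hat₁ : a ∉ t₁ := (List.nodup_cons.mp hnd₁).1
    by_cases hal : a ∈ l
    · -- l = a :: r
      rcases List.sublist_cons_iff.mp hs₁ with h | ⟨r, rfl, hr⟩
      · exact absurd (h.subset hal) hat₁
      -- a must be head of l, so l = a :: r... but sublist_cons_iff second case gives l = a :: r directly
      -- Now analyze B₂
      cases B₂ with
      | nil => exact absurd (hp.subset ((List.mem_cons_self (a := a) (l := t₁)))) (by simp)
      | cons b t₂ =>
        have hbt₂ : b ∉ t₂ := (List.nodup_cons.mp hnd₂).1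
        by_cases hba : b = a
        · subst hba
          have hr₂ : r <+ t₂ := by
            rcases List.sublist_cons_iff.mp hs₂ with h | ⟨r', he, hr'⟩
            · exact absurd (h.subset ((List.mem_cons_self (a := b) (l := r)))) hbt₂
            · obtain rfl : r = r' := by simpa using he
              exact hr'
          have hr₁ : r <+ t₁ := by
            rcases List.sublist_cons_iff.mp hs₁ with h | ⟨r', he, hr'⟩
            · exact absurd (h.subset ((List.mem_cons_self (a := b) (l := r)))) hat₁
            · obtain rfl : r = r' := by simpa using he
              exact hr'
          congr 1
          apply ih t₂ r (List.nodup_cons.mp hnd₁).2 (List.nodup_cons.mp hnd₂).2 hr₁ hr₂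
            hp.cons_inv
          intro x hx hxr
          have hxa : x ≠ b := fun h => hat₁ (h ▸ hx)
          have hxl : x ∉ b :: r := by simp [hxa, hxr]
          have := hidx x (List.mem_cons_of_mem _ hx) hxl
          rwa [List.idxOf_cons_ne _ (Ne.symm hxa), List.idxOf_cons_ne _ (Ne.symm hxa),
            Nat.succ_inj] at this
        · exfalso
          have hbB₁ : b ∈ a :: t₁ := hp.symm.subset ((List.mem_cons_self (a := b) (l := t₂)))
          have hbt₁ : b ∈ t₁ := by
            rcases List.mem_cons.mp hbB₁ with h | h
            · exact absurd h hba
            · exact h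
          by_cases hbl : b ∈ a :: r
          · have hbr : b ∈ r := by
              rcases List.mem_cons.mp hbl with h | h
              · exact absurd h hba
              · exact h
            have : (a :: r) <+ t₂ := by
              rcases List.sublist_cons_iff.mp hs₂ with h | ⟨r', he, hr'⟩
              · exact h
              · exact absurd (by injection he with h1 _; exact h1.symm) hba
            exact hbt₂ (this.subset (List.mem_cons_of_mem _ hbr))
          · have := hidx b hbB₁ hbl
            rw [List.idxOf_cons_self, List.idxOf_cons_ne _ (Ne.symm hba)] at this
            exact Nat.succ_ne_zero _ this
    · -- a ∉ l, so l <+ t₁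
      have hlt₁ : l <+ t₁ := by
        rcases List.sublist_cons_iff.mp hs₁ with h | ⟨r, rfl, _⟩
        · exact h
        · exact absurd ((List.mem_cons_self (a := a) (l := r))) hal
      cases B₂ with
      | nil => exact absurd (hp.subset ((List.mem_cons_self (a := a) (l := t₁)))) (by simp)
      | cons b t₂ =>
        have hba : b = a := by
          by_contra hba
          have := hidx a ((List.mem_cons_self (a := a) (l := t₁))) hal
          rw [List.idxOf_cons_self, List.idxOf_cons_ne _ hba] at this
          exact Nat.succ_ne_zero _ this.symm
        subst hba
        have hlt₂ : l <+ t₂ := by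
          rcases List.sublist_cons_iff.mp hs₂ with h | ⟨r, rfl, _⟩
          · exact h
          · exact absurd ((List.mem_cons_self (a := b) (l := r))) hal
        congr 1
        apply ih t₂ l (List.nodup_cons.mp hnd₁).2 (List.nodup_cons.mp hnd₂).2 hlt₁ hlt₂
          hp.cons_inv
        intro x hx hxl
        have hxa : x ≠ b := fun h => hat₁ (h ▸ hx)
        have := hidx x (List.mem_cons_of_mem _ hx) hxl
        rwa [List.idxOf_cons_ne _ (Ne.symm hxa), List.idxOf_cons_ne _ (Ne.symm hxa),
          Nat.succ_inj] at this

lemma GV.indexOf_ofFn {n : ℕ} (τ : Equiv.Perm (Fin n)) (x : Fin n) :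
    (List.ofFn ⇑τ).idxOf x = (τ.symm x : ℕ) := by
  have hnd : (List.ofFn ⇑τ).Nodup := List.nodup_ofFn.mpr τ.injective
  have hmem : x ∈ List.ofFn ⇑τ := by
    rw [List.mem_ofFn]
    exact ⟨τ.symm x, by simp⟩
  have h1 : (List.ofFn ⇑τ).get ⟨(List.ofFn ⇑τ).idxOf x, List.idxOf_lt_length_iff.2 hmem⟩ = x :=
    List.idxOf_get _
  have h2 : (List.ofFn ⇑τ).get ⟨(τ.symm x : ℕ), by simp⟩ = x := by
    rw [List.get_ofFn]
    simp
  have := (hnd.get_inj_iff).mp (h1.trans h2.symm)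
  exact congrArg Fin.val this

lemma GV.toFinset_ofFn_perm {n : ℕ} (τ : Equiv.Perm (Fin n)) :
    (List.ofFn ⇑τ).toFinset = Finset.univ := by
  ext x
  simp only [List.mem_toFinset, List.mem_ofFn, Finset.mem_univ, iff_true]
  exact ⟨τ.symm x, by simp⟩

open scoped Classical in
lemma GV.ball_bound {n d : ℕ} (hd : 0 < d) (hdn : d ≤ n) (π : Equiv.Perm (Fin n)) :
    (Finset.univ.filter fun τ : Equiv.Perm (Fin n) => ulam n π τ ≤ d - 1).card
      ≤ Nat.choose n (d - 1) * Nat.descFactorial n (d - 1) := by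
  set m : ℕ := n - (d - 1) with hm
  set A : List (Fin n) := List.ofFn ⇑π with hA
  have hAnd : A.Nodup := List.nodup_ofFn.mpr π.injective
  have hAlen : A.length = n := List.length_ofFn
  set ball := Finset.univ.filter fun τ : Equiv.Perm (Fin n) => ulam n π τ ≤ d - 1 with hball
  set P : Equiv.Perm (Fin n) → List (Fin n) → Prop :=
    fun τ l => l.length = m ∧ l.Sublist A ∧ l.Sublist (List.ofFn ⇑τ) with hP
  have hkey : ∀ τ ∈ ball, ∃ l, P τ l := by
    intro τ hτ
    rw [hball, Finset.mem_filter] at hτ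
    set Sset : Set ℕ :=
      {k | ∃ l : List (Fin n), l.length = k ∧ l.Sublist A ∧ l.Sublist (List.ofFn ⇑τ)} with hSset
    have hne : Sset.Nonempty := ⟨0, [], rfl, List.nil_sublist _, List.nil_sublist _⟩
    have hbdd : BddAbove Sset := by
      refine ⟨n, ?_⟩
      rintro k ⟨l, rfl, hlA, -⟩
      simpa [hAlen] using hlA.length_le
    obtain ⟨l, hlen, hlA, hlB⟩ := Nat.sSup_mem hne hbdd
    have hulam : ulam n π τ = n - sSup Sset := rfl
    have hln : l.length ≤ n := by simpa [hAlen] using hlA.length_le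
    have hge : m ≤ l.length := by
      have h2 := hτ.2
      rw [hulam] at h2
      omega
    exact ⟨l.take m, ⟨by rw [List.length_take]; omega,
      (l.take_sublist m).trans hlA, (l.take_sublist m).trans hlB⟩⟩
  set f : Equiv.Perm (Fin n) → Finset (Fin n) :=
    fun τ => if h : ∃ l, P τ l then Finset.univ \ h.choose.toFinset else ∅ with hf
  have hfmem : ∀ τ ∈ ball, f τ ∈ Finset.univ.powersetCard (d - 1) := by
    intro τ hτ
    have h := hkey τ hτ
    obtain ⟨hlen, hlA, hlB⟩ := h.choose_spec
    have hnd : h.choose.Nodup := hlA.nodup hAnd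
    rw [Finset.mem_powersetCard_univ]
    simp only [hf, dif_pos h]
    rw [Finset.card_sdiff_of_subset (Finset.subset_univ _), Finset.card_univ,
      Fintype.card_fin, List.toFinset_card_of_nodup hnd, hlen]
    omega
  rw [Finset.card_eq_sum_card_fiberwise hfmem]
  have hfiber : ∀ S ∈ Finset.univ.powersetCard (d - 1),
      (ball.filter fun τ => f τ = S).card ≤ Nat.descFactorial n (d - 1) := by
    intro S hS
    have hScard : S.card = d - 1 := Finset.mem_powersetCard_univ.mp hS
    have hinj : Set.InjOn (fun τ : Equiv.Perm (Fin n) =>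
        (⟨fun s : ↥S => τ.symm s.1, fun s₁ s₂ h => Subtype.ext (τ.symm.injective h)⟩ :
          ↥S ↪ Fin n)) ↑(ball.filter fun τ => f τ = S) := by
      intro τ₁ h₁ τ₂ h₂ hg
      simp only [Finset.coe_filter, Set.mem_setOf_eq] at h₁ h₂
      obtain ⟨hb₁, hf₁⟩ := h₁
      obtain ⟨hb₂, hf₂⟩ := h₂
      have hx₁ := hkey τ₁ hb₁
      have hx₂ := hkey τ₂ hb₂
      obtain ⟨hlen₁, hlA₁, hlB₁⟩ := hx₁.choose_spec
      obtain ⟨hlen₂, hlA₂, hlB₂⟩ := hx₂.choose_spec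
      simp only [hf, dif_pos hx₁] at hf₁
      simp only [hf, dif_pos hx₂] at hf₂
      -- toFinsets are equal
      have hT : hx₁.choose.toFinset = hx₂.choose.toFinset := by
        have e1 : Finset.univ \ (Finset.univ \ hx₁.choose.toFinset) = hx₁.choose.toFinset :=
          Finset.sdiff_sdiff_eq_self (Finset.subset_univ _)
        have e2 : Finset.univ \ (Finset.univ \ hx₂.choose.toFinset) = hx₂.choose.toFinset :=
          Finset.sdiff_sdiff_eq_self (Finset.subset_univ _)
        rw [← e1, ← e2, hf₁, hf₂]
      -- hence the chosen lists are equal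
      have hleq : hx₁.choose = hx₂.choose := by
        have e1 := GV.filter_mem_of_sublist hAnd hlA₁
        have e2 := GV.filter_mem_of_sublist hAnd hlA₂
        have : A.filter (· ∈ hx₁.choose) = A.filter (· ∈ hx₂.choose) := by
          apply List.filter_congr
          intro x _
          have : x ∈ hx₁.choose ↔ x ∈ hx₂.choose := by
            rw [← List.mem_toFinset, ← List.mem_toFinset, hT]
          simp [this]
        rw [e1, e2] at this
        exact this
      -- apply the reconstruction lemma
      have hmain : List.ofFn ⇑τ₁ = List.ofFn ⇑τ₂ := by
        apply GV.eq_of_sublist_indexOf (List.ofFn ⇑τ₁) (List.ofFn ⇑τ₂) hx₁.choose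
          (List.nodup_ofFn.mpr τ₁.injective) (List.nodup_ofFn.mpr τ₂.injective)
          hlB₁ (hleq ▸ hlB₂)
        · apply List.perm_of_nodup_nodup_toFinset_eq
            (List.nodup_ofFn.mpr τ₁.injective) (List.nodup_ofFn.mpr τ₂.injective)
          rw [GV.toFinset_ofFn_perm, GV.toFinset_ofFn_perm]
        · intro x _ hxl
          have hxS : x ∈ S := by
            rw [← hf₁, Finset.mem_sdiff]
            exact ⟨Finset.mem_univ _, fun hc => hxl (List.mem_toFinset.mp hc)⟩
          have := congrFun (congrArg (fun (e : ↥S ↪ Fin n) => ⇑e) hg) ⟨x, hxS⟩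
          simp only [Function.Embedding.coeFn_mk] at this
          rw [GV.indexOf_ofFn, GV.indexOf_ofFn]
          exact congrArg Fin.val this
      have : ⇑τ₁ = ⇑τ₂ := List.ofFn_injective hmain
      exact Equiv.coe_fn_injective this
    calc (ball.filter fun τ => f τ = S).card
        ≤ Fintype.card (↥S ↪ Fin n) := by
          rw [← Finset.card_univ]
          exact Finset.card_le_card_of_injOn _ (fun τ _ => Finset.mem_univ _) hinj
      _ = Nat.descFactorial n (d - 1) := by
          rw [Fintype.card_embedding_eq, Fintype.card_coe, Fintype.card_fin, hScard]
  calc ∑ S ∈ Finset.univ.powersetCard (d - 1), (ball.filter fun τ => f τ = S).card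
      ≤ ∑ S ∈ Finset.univ.powersetCard (d - 1), Nat.descFactorial n (d - 1) :=
        Finset.sum_le_sum hfiber
    _ = Nat.choose n (d - 1) * Nat.descFactorial n (d - 1) := by
        rw [Finset.sum_const, smul_eq_mul, Finset.card_powersetCard, Finset.card_univ,
          Fintype.card_fin]

open scoped Classical in
lemma GV.fiber_bound {n r : ℕ} (hr : 0 < r) (hdvd : r ∣ n) (π₀ : Equiv.Perm (Fin n)) :
    (Finset.univ.filter fun π' : Equiv.Perm (Fin n) => mp n r π' = mp n r π₀).card
      ≤ (Nat.factorial r) ^ (n / r) := by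
  set q := n / r with hq
  have hn' : r * q = n := Nat.mul_div_cancel' hdvd
  have aux : ∀ a b : ℕ, a / r = b / r → a % r = b % r → a = b := by
    intro a b h1 h2
    rw [← Nat.div_add_mod a r, ← Nat.div_add_mod b r, h1, h2]
  have hlt : ∀ (i : Fin q) (k : Fin r), r * (i : ℕ) + (k : ℕ) < n := by
    intro i k
    calc r * (i : ℕ) + (k : ℕ) < r * (i : ℕ) + r := by omega
      _ = r * ((i : ℕ) + 1) := by ring
      _ ≤ r * q := Nat.mul_le_mul_left r i.2
      _ = n := hn'
  have hdiv : ∀ (i : Fin q) (k : Fin r), (r * (i : ℕ) + (k : ℕ)) / r = (i : ℕ) := by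
    intro i k
    rw [Nat.mul_add_div hr, Nat.div_eq_of_lt k.2, Nat.add_zero]
  have hdelta : ∀ (π' : Equiv.Perm (Fin n)), mp n r π' = mp n r π₀ →
      ∀ x : Fin n, ((π'.symm (π₀ x) : ℕ)) / r = (x : ℕ) / r := by
    intro π' h x
    have := congrFun h (π₀ x)
    simpa [mp] using this
  set F : Equiv.Perm (Fin n) → (Fin q → (Fin r ↪ Fin r)) := fun π' =>
    if h : mp n r π' = mp n r π₀ then
      fun i => ⟨fun k => ⟨(π'.symm (π₀ ⟨r * (i : ℕ) + (k : ℕ), hlt i k⟩) : ℕ) % r,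
          Nat.mod_lt _ hr⟩, by
        intro k k' hkk
        have hmod : (π'.symm (π₀ ⟨r * (i : ℕ) + (k : ℕ), hlt i k⟩) : ℕ) % r
            = (π'.symm (π₀ ⟨r * (i : ℕ) + (k' : ℕ), hlt i k'⟩) : ℕ) % r :=
          congrArg Fin.val hkk
        have h1 : (π'.symm (π₀ ⟨r * (i : ℕ) + (k : ℕ), hlt i k⟩) : ℕ) / r = (i : ℕ) := by
          rw [hdelta π' h]; exact hdiv i k
        have h2 : (π'.symm (π₀ ⟨r * (i : ℕ) + (k' : ℕ), hlt i k'⟩) : ℕ) / r = (i : ℕ) := by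
          rw [hdelta π' h]; exact hdiv i k'
        have heq : (π'.symm (π₀ ⟨r * (i : ℕ) + (k : ℕ), hlt i k⟩) : ℕ)
            = (π'.symm (π₀ ⟨r * (i : ℕ) + (k' : ℕ), hlt i k'⟩) : ℕ) :=
          aux _ _ (h1.trans h2.symm) hmod
        have hfin := π₀.injective (π'.symm.injective (Fin.ext heq))
        have hval : r * (i : ℕ) + (k : ℕ) = r * (i : ℕ) + (k' : ℕ) := congrArg Fin.val hfin
        exact Fin.ext (Nat.add_left_cancel hval)⟩
    else fun _ => ⟨id, fun a b hab => hab⟩ with hF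
  have hinj : Set.InjOn F ↑(Finset.univ.filter
      fun π' : Equiv.Perm (Fin n) => mp n r π' = mp n r π₀) := by
    intro π₁ h₁ π₂ h₂ hFeq
    simp only [Finset.coe_filter, Set.mem_setOf_eq] at h₁ h₂
    have hm₁ := h₁.2
    have hm₂ := h₂.2
    simp only [hF, dif_pos hm₁, dif_pos hm₂] at hFeq
    have hsymm : π₁.symm = π₂.symm := by
      apply Equiv.ext
      intro j
      obtain ⟨x, hj⟩ := π₀.surjective j
      subst hj
      have hxq : (x : ℕ) / r < q := by
        have hxn : (x : ℕ) < r * q := by rw [hn']; exact x.2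
        exact Nat.div_lt_of_lt_mul (by omega)
      have hx : (⟨r * ((⟨(x : ℕ) / r, hxq⟩ : Fin q) : ℕ)
          + ((⟨(x : ℕ) % r, Nat.mod_lt _ hr⟩ : Fin r) : ℕ),
          hlt ⟨(x : ℕ) / r, hxq⟩ ⟨(x : ℕ) % r, Nat.mod_lt _ hr⟩⟩ : Fin n) = x :=
        Fin.ext (Nat.div_add_mod (x : ℕ) r)
      have hcomp := congrFun (congrArg (fun (e : Fin r ↪ Fin r) => ⇑e)
        (congrFun hFeq ⟨(x : ℕ) / r, hxq⟩)) ⟨(x : ℕ) % r, Nat.mod_lt _ hr⟩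
      simp only [Function.Embedding.coeFn_mk, hx] at hcomp
      have hmod : (π₁.symm (π₀ x) : ℕ) % r = (π₂.symm (π₀ x) : ℕ) % r := by
        have h : (π₁.symm (π₀ (⟨r * ((⟨(x : ℕ) / r, hxq⟩ : Fin q) : ℕ)
            + ((⟨(x : ℕ) % r, Nat.mod_lt _ hr⟩ : Fin r) : ℕ),
            hlt ⟨(x : ℕ) / r, hxq⟩ ⟨(x : ℕ) % r, Nat.mod_lt _ hr⟩⟩ : Fin n)) : ℕ) % r
            = (π₂.symm (π₀ (⟨r * ((⟨(x : ℕ) / r, hxq⟩ : Fin q) : ℕ)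
            + ((⟨(x : ℕ) % r, Nat.mod_lt _ hr⟩ : Fin r) : ℕ),
            hlt ⟨(x : ℕ) / r, hxq⟩ ⟨(x : ℕ) % r, Nat.mod_lt _ hr⟩⟩ : Fin n)) : ℕ) % r :=
          congrArg Fin.val hcomp
        rwa [hx] at h
      have hd₁ := hdelta π₁ hm₁ x
      have hd₂ := hdelta π₂ hm₂ x
      exact Fin.ext (aux _ _ (hd₁.trans hd₂.symm) hmod)
    have hrw : π₁ = (π₁.symm).symm := rfl
    rw [hrw, hsymm]
    rfl
  calc (Finset.univ.filter fun π' : Equiv.Perm (Fin n) => mp n r π' = mp n r π₀).card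
      ≤ Fintype.card (Fin q → (Fin r ↪ Fin r)) := by
        rw [← Finset.card_univ]
        exact Finset.card_le_card_of_injOn F (fun _ _ => Finset.mem_univ _) hinj
    _ = (Nat.factorial r) ^ q := by
        rw [Fintype.card_fun, Fintype.card_embedding_eq, Fintype.card_fin, Fintype.card_fin,
          Nat.descFactorial_self]

lemma GV.lcsLen_comm {α : Type*} (A B : List α) : lcsLen A B = lcsLen B A := by
  unfold lcsLen
  congr 1
  ext k
  constructor
  · rintro ⟨l, h1, h2, h3⟩; exact ⟨l, h1, h3, h2⟩
  · rintro ⟨l, h1, h2, h3⟩; exact ⟨l, h1, h3, h2⟩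

lemma GV.ulam_comm {n : ℕ} (π σ : Equiv.Perm (Fin n)) : ulam n π σ = ulam n σ π := by
  unfold ulam
  rw [GV.lcsLen_comm]

lemma GV.ulamR_comm {n r : ℕ} (π σ : Equiv.Perm (Fin n)) : ulamR n r π σ = ulamR n r σ π := by
  unfold ulamR
  congr 1
  ext k
  constructor
  · rintro ⟨π', σ', h1, h2, h3⟩; exact ⟨σ', π', h2, h1, h3.trans (GV.ulam_comm _ _)⟩
  · rintro ⟨π', σ', h1, h2, h3⟩; exact ⟨σ', π', h2, h1, h3.trans (GV.ulam_comm _ _)⟩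

lemma GV.ulam_self {n : ℕ} (τ : Equiv.Perm (Fin n)) : ulam n τ τ = 0 := by
  unfold ulam
  have hbdd : BddAbove {k | ∃ l : List (Fin n),
      l.length = k ∧ l.Sublist (List.ofFn ⇑τ) ∧ l.Sublist (List.ofFn ⇑τ)} := by
    refine ⟨n, ?_⟩
    rintro k ⟨l, rfl, hlA, -⟩
    simpa using hlA.length_le
  have hmem : n ∈ {k | ∃ l : List (Fin n),
      l.length = k ∧ l.Sublist (List.ofFn ⇑τ) ∧ l.Sublist (List.ofFn ⇑τ)} :=
    ⟨List.ofFn ⇑τ, List.length_ofFn, List.Sublist.refl _, List.Sublist.refl _⟩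
  have := le_csSup hbdd hmem
  unfold lcsLen
  omega

lemma GV.maximal_code (n r d : ℕ) (hd : 0 < d) :
    ∃ C : Finset (Equiv.Perm (Fin n)), C.card = AU n r d ∧
      ∀ τ : Equiv.Perm (Fin n), ∃ π ∈ C, ∃ π' σ' : Equiv.Perm (Fin n),
        mp n r π' = mp n r π ∧ mp n r σ' = mp n r τ ∧ ulam n π' σ' ≤ d - 1 := by
  set SA := {M | ∃ C : Finset (Equiv.Perm (Fin n)), C.card = M ∧
    ∀ π ∈ C, ∀ σ ∈ C, π ≠ σ → mp n r π ≠ mp n r σ ∧ d ≤ ulamR n r π σ} with hSA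
  have hbdd : BddAbove SA := by
    refine ⟨Fintype.card (Equiv.Perm (Fin n)), ?_⟩
    rintro M ⟨C, rfl, -⟩
    exact (Finset.card_le_univ C).trans (le_of_eq (Finset.card_univ))
  have hne : SA.Nonempty := ⟨0, ∅, rfl, by simp⟩
  have hmem : AU n r d ∈ SA := Nat.sSup_mem hne hbdd
  obtain ⟨C, hcard, hprop⟩ := hmem
  refine ⟨C, hcard, ?_⟩
  intro τ
  -- covering by maximality
  have hcover : ∃ π ∈ C, mp n r π = mp n r τ ∨ ulamR n r π τ < d := by
    by_contra hcon
    push_neg at hcon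
    have hτC : τ ∉ C := by
      intro hτ
      exact (hcon τ hτ).1 rfl
    have hnew : ∀ π ∈ insert τ C, ∀ σ ∈ insert τ C, π ≠ σ →
        mp n r π ≠ mp n r σ ∧ d ≤ ulamR n r π σ := by
      intro π hπ σ hσ hne'
      rcases Finset.mem_insert.mp hπ with rfl | hπC
      · rcases Finset.mem_insert.mp hσ with rfl | hσC
        · exact absurd rfl hne'
        · obtain ⟨h1, h2⟩ := hcon σ hσC
          exact ⟨fun h => h1 h.symm, by rw [GV.ulamR_comm]; omega⟩
      · rcases Finset.mem_insert.mp hσ with rfl | hσC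
        · obtain ⟨h1, h2⟩ := hcon π hπC
          exact ⟨h1, by omega⟩
        · exact hprop π hπC σ hσC hne'
    have : C.card + 1 ∈ SA :=
      ⟨insert τ C, by rw [Finset.card_insert_of_notMem hτC], hnew⟩
    have hle : C.card + 1 ≤ sSup SA := le_csSup hbdd this
    have : sSup SA = AU n r d := rfl
    omega
  obtain ⟨π, hπC, hcase⟩ := hcover
  rcases hcase with heq | hlt
  · exact ⟨π, hπC, τ, τ, heq.symm, rfl, by rw [GV.ulam_self]; omega⟩
  · have hne' : {k | ∃ π' σ' : Equiv.Perm (Fin n),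
        mp n r π' = mp n r π ∧ mp n r σ' = mp n r τ ∧ k = ulam n π' σ'}.Nonempty :=
      ⟨ulam n π τ, π, τ, rfl, rfl, rfl⟩
    obtain ⟨π', σ', h1, h2, h3⟩ := Nat.sInf_mem hne'
    refine ⟨π, hπC, π', σ', h1, h2, ?_⟩
    have : ulamR n r π τ = sInf {k | ∃ π' σ' : Equiv.Perm (Fin n),
        mp n r π' = mp n r π ∧ mp n r σ' = mp n r τ ∧ k = ulam n π' σ'} := rfl
    omega

open scoped Classical in
/-- Gilbert–Varshamov bound in the Ulam metric:
`A_∘(n,r,d) ≥ (n-d+1)! / (C(n,d-1) · (r!)^{2n/r})`, stated in cross-multiplied form. -/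
theorem AU_gilbert_varshamov (n r d : ℕ) (hn : 0 < n) (hr : 0 < r) (hd : 0 < d)
    (hdn : d ≤ n) (hdvd : r ∣ n) :
    Nat.factorial (n - d + 1) ≤
      AU n r d * (Nat.choose n (d - 1) * (Nat.factorial r) ^ (2 * (n / r))) := by
  obtain ⟨C, hcard, hcover⟩ := GV.maximal_code n r d hd
  set K := (Nat.factorial r) ^ (n / r) with hK
  set Bs := Nat.choose n (d - 1) * Nat.descFactorial n (d - 1) with hBs
  have h1 : ∀ τ : Equiv.Perm (Fin n),
      ∃ y : Equiv.Perm (Fin n) × Equiv.Perm (Fin n) × Equiv.Perm (Fin n),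
      y.1 ∈ C ∧ mp n r y.2.1 = mp n r y.1 ∧ mp n r y.2.2 = mp n r τ ∧
        ulam n y.2.1 y.2.2 ≤ d - 1 := by
    intro τ
    obtain ⟨π, hπ, π', σ', ha, hb, hc⟩ := hcover τ
    exact ⟨(π, π', σ'), hπ, ha, hb, hc⟩
  set Φ : Equiv.Perm (Fin n) →
      Equiv.Perm (Fin n) × Equiv.Perm (Fin n) × Equiv.Perm (Fin n) :=
    fun τ => (h1 τ).choose with hΦ
  have hΦspec : ∀ τ, (Φ τ).1 ∈ C ∧ mp n r (Φ τ).2.1 = mp n r (Φ τ).1 ∧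
      mp n r (Φ τ).2.2 = mp n r τ ∧ ulam n (Φ τ).2.1 (Φ τ).2.2 ≤ d - 1 :=
    fun τ => (h1 τ).choose_spec
  set T : Finset (Equiv.Perm (Fin n) × Equiv.Perm (Fin n) × Equiv.Perm (Fin n)) :=
    (C ×ˢ Finset.univ ×ˢ Finset.univ).filter fun y =>
      mp n r y.2.1 = mp n r y.1 ∧ ulam n y.2.1 y.2.2 ≤ d - 1 with hT
  have hmaps : ∀ τ ∈ (Finset.univ : Finset (Equiv.Perm (Fin n))), Φ τ ∈ T := by
    intro τ _
    obtain ⟨ha, hb, hc, hdd⟩ := hΦspec τ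
    rw [hT, Finset.mem_filter]
    refine ⟨?_, hb, hdd⟩
    rw [Finset.mem_product, Finset.mem_product]
    exact ⟨ha, Finset.mem_univ _, Finset.mem_univ _⟩
  -- Step 1 : n! ≤ T.card * K
  have hstep1 : Nat.factorial n ≤ T.card * K := by
    have heq := Finset.card_eq_sum_card_fiberwise hmaps
    have hfib : ∀ y ∈ T, (Finset.univ.filter fun τ => Φ τ = y).card ≤ K := by
      intro y _
      have hsub : (Finset.univ.filter fun τ => Φ τ = y) ⊆
          (Finset.univ.filter fun τ => mp n r τ = mp n r y.2.2) := by
        intro τ hτ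
        rw [Finset.mem_filter] at hτ ⊢
        refine ⟨Finset.mem_univ _, ?_⟩
        have := (hΦspec τ).2.2.1
        rw [hτ.2] at this
        exact this.symm
      exact (Finset.card_le_card hsub).trans (GV.fiber_bound hr hdvd y.2.2)
    calc Nat.factorial n = Fintype.card (Equiv.Perm (Fin n)) := by
          rw [Fintype.card_perm, Fintype.card_fin]
      _ = (Finset.univ : Finset (Equiv.Perm (Fin n))).card := (Finset.card_univ).symm
      _ = ∑ y ∈ T, (Finset.univ.filter fun τ => Φ τ = y).card := heq
      _ ≤ ∑ _y ∈ T, K := Finset.sum_le_sum hfib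
      _ = T.card * K := by rw [Finset.sum_const, smul_eq_mul]
  -- Step 2 : T.card ≤ D.card * Bs
  set D : Finset (Equiv.Perm (Fin n) × Equiv.Perm (Fin n)) :=
    (C ×ˢ Finset.univ).filter fun p => mp n r p.2 = mp n r p.1 with hD
  have hstep2 : T.card ≤ D.card * Bs := by
    have hm2 : ∀ y ∈ T, (y.1, y.2.1) ∈ D := by
      intro y hy
      rw [hT, Finset.mem_filter, Finset.mem_product, Finset.mem_product] at hy
      rw [hD, Finset.mem_filter, Finset.mem_product]
      exact ⟨⟨hy.1.1, Finset.mem_univ _⟩, hy.2.1⟩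
    have heq := Finset.card_eq_sum_card_fiberwise hm2
    have hfib : ∀ p ∈ D, (T.filter fun y => (y.1, y.2.1) = p).card ≤ Bs := by
      intro p _
      have hinj : Set.InjOn (fun y : Equiv.Perm (Fin n) × Equiv.Perm (Fin n) ×
          Equiv.Perm (Fin n) => y.2.2) ↑(T.filter fun y => (y.1, y.2.1) = p) := by
        intro y hy z hz hyz
        simp only [Finset.coe_filter, Set.mem_setOf_eq] at hy hz
        have h1 : y.1 = p.1 := congrArg Prod.fst hy.2
        have h2 : y.2.1 = p.2 := congrArg Prod.snd hy.2
        have h3 : z.1 = p.1 := congrArg Prod.fst hz.2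
        have h4 : z.2.1 = p.2 := congrArg Prod.snd hz.2
        have : y.2 = z.2 := Prod.ext (h2.trans h4.symm) hyz
        exact Prod.ext (h1.trans h3.symm) this
      have hmapsto : ∀ y ∈ (T.filter fun y => (y.1, y.2.1) = p),
          y.2.2 ∈ Finset.univ.filter fun σ' => ulam n p.2 σ' ≤ d - 1 := by
        intro y hy
        rw [Finset.mem_filter] at hy
        have h2 : y.2.1 = p.2 := congrArg Prod.snd hy.2
        have hyT := hy.1
        rw [hT, Finset.mem_filter] at hyT
        rw [Finset.mem_filter]
        refine ⟨Finset.mem_univ _, ?_⟩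
        rw [← h2]
        exact hyT.2.2
      exact (Finset.card_le_card_of_injOn _ hmapsto hinj).trans
        (GV.ball_bound hd hdn p.2)
    calc T.card = ∑ p ∈ D, (T.filter fun y => (y.1, y.2.1) = p).card := heq
      _ ≤ ∑ _p ∈ D, Bs := Finset.sum_le_sum hfib
      _ = D.card * Bs := by rw [Finset.sum_const, smul_eq_mul]
  -- Step 3 : D.card ≤ AU * K
  have hstep3 : D.card ≤ AU n r d * K := by
    have hm3 : ∀ p ∈ D, p.1 ∈ C := by
      intro p hp
      rw [hD, Finset.mem_filter, Finset.mem_product] at hp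
      exact hp.1.1
    have heq := Finset.card_eq_sum_card_fiberwise hm3
    have hfib : ∀ π ∈ C, (D.filter fun p => p.1 = π).card ≤ K := by
      intro π _
      have hinj : Set.InjOn (fun p : Equiv.Perm (Fin n) × Equiv.Perm (Fin n) => p.2)
          ↑(D.filter fun p => p.1 = π) := by
        intro p hp q hq hpq
        simp only [Finset.coe_filter, Set.mem_setOf_eq] at hp hq
        exact Prod.ext (hp.2.trans hq.2.symm) hpq
      have hmapsto : ∀ p ∈ (D.filter fun p => p.1 = π),
          p.2 ∈ Finset.univ.filter fun π' => mp n r π' = mp n r π := by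
        intro p hp
        rw [Finset.mem_filter] at hp
        have hpD := hp.1
        rw [hD, Finset.mem_filter] at hpD
        rw [Finset.mem_filter]
        exact ⟨Finset.mem_univ _, by rw [← hp.2]; exact hpD.2⟩
      exact (Finset.card_le_card_of_injOn _ hmapsto hinj).trans
        (GV.fiber_bound hr hdvd π)
    calc D.card = ∑ π ∈ C, (D.filter fun p => p.1 = π).card := heq
      _ ≤ ∑ _π ∈ C, K := Finset.sum_le_sum hfib
      _ = C.card * K := by rw [Finset.sum_const, smul_eq_mul]
      _ = AU n r d * K := by rw [hcard]
  -- Combine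
  have hfin : Nat.factorial n ≤ AU n r d * K * Bs * K :=
    hstep1.trans (Nat.mul_le_mul_right K (hstep2.trans
      (Nat.mul_le_mul_right Bs hstep3)))
  have hd1n : d - 1 ≤ n := by omega
  have hfact : Nat.factorial (n - d + 1) * Nat.descFactorial n (d - 1)
      = Nat.factorial n := by
    have := Nat.factorial_mul_descFactorial hd1n
    have h : n - (d - 1) = n - d + 1 := by omega
    rw [h] at this
    exact this
  have hpos : 0 < Nat.descFactorial n (d - 1) := by
    apply Nat.pos_of_ne_zero
    rw [Ne, Nat.descFactorial_eq_zero_iff_lt]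
    omega
  apply Nat.le_of_mul_le_mul_right _ hpos
  calc Nat.factorial (n - d + 1) * Nat.descFactorial n (d - 1)
      = Nat.factorial n := hfact
    _ ≤ AU n r d * K * Bs * K := hfin
    _ = AU n r d * (Nat.choose n (d - 1) * (Nat.factorial r) ^ (2 * (n / r)))
        * Nat.descFactorial n (d - 1) := by
        rw [hBs, hK, two_mul, pow_add]
        ring
end

section
/- The rows of a semi-Latin square with parameters n and r, viewed as ordered set partitions of [n], satisfy the property that any two parts occupying the same column position of distinct rows are disjoint; consequently they form an r-regular multipermutation code of length n with minimum r-regular Ulam distance at least r, of cardinality n/r. -/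
/-- The multipermutation code obtained from the rows of a semi-Latin square `L`:
a permutation is a codeword iff its ordered set partition is some row of `L`. -/
def slsCode (n r : ℕ) (L : Fin (n / r) → Fin (n / r) → Finset (Fin n)) :
    Set (Equiv.Perm (Fin n)) :=
  {π | ∃ i : Fin (n / r), ∀ j : Fin (n / r), part n r π (j : ℕ) = L i j}

lemma mem_part_iff (n r : ℕ) (π : Equiv.Perm (Fin n)) (i : ℕ) (x : Fin n) :
    x ∈ part n r π i ↔ mp n r π x = i := by simp [part]

lemma mp_head_eq_zero (n r : ℕ) (hr : 0 < r) (π : Equiv.Perm (Fin n))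
    (x : Fin n) (t : List (Fin n)) (hsub : (x :: t).Sublist (List.ofFn π))
    (hlen : n - r < (x :: t).length) : mp n r π x = 0 := by
  rw [List.cons_sublist_iff] at hsub
  obtain ⟨r₁, r₂, hA, hx, ht⟩ := hsub
  obtain ⟨a, b, rfl⟩ := List.append_of_mem hx
  have hL := congrArg List.length hA
  simp only [List.length_ofFn, List.length_append, List.length_cons] at hL
  have htr := ht.length_le
  simp only [List.length_cons] at hlen
  have hal : a.length < r := by omega
  have hidx : a.length < n := by omega
  have hidx' : a.length < (List.ofFn π).length := by simpa [List.length_ofFn]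
  have hget : (List.ofFn π)[a.length]? = some x := by
    rw [hA, List.append_assoc, List.cons_append,
      List.getElem?_append_right (le_refl a.length)]
    simp
  rw [List.getElem?_eq_getElem hidx', List.getElem_ofFn] at hget
  have hget' : π ⟨a.length, hidx⟩ = x := by
    simpa using hget
  have hsymm : π.symm x = ⟨a.length, hidx⟩ := by
    rw [← hget']; exact π.symm_apply_apply _
  simp [mp, hsymm, Nat.div_eq_of_lt hal]

lemma lcsLen_le (n r : ℕ) (hr : 0 < r) (hrn : r ≤ n) (π σ : Equiv.Perm (Fin n))
    (h : ∀ x, mp n r π x ≠ mp n r σ x) :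
    lcsLen (List.ofFn π) (List.ofFn σ) ≤ n - r := by
  unfold lcsLen
  apply csSup_le
  · exact ⟨0, [], rfl, List.nil_sublist _, List.nil_sublist _⟩
  rintro k ⟨l, rfl, hA, hB⟩
  by_contra hlt
  push_neg at hlt
  obtain ⟨x, t, rfl⟩ : ∃ x t, l = x :: t := by
    cases l with
    | nil => simp at hlt
    | cons a t => exact ⟨a, t, rfl⟩
  exact h x ((mp_head_eq_zero n r hr π x t hA hlt).trans
    (mp_head_eq_zero n r hr σ x t hB hlt).symm)

lemma mp_lt (n r : ℕ) (hdvd : r ∣ n) (π : Equiv.Perm (Fin n)) (x : Fin n) :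
    mp n r π x < n / r := Nat.div_lt_div_of_lt_of_dvd hdvd (π.symm x).isLt

lemma exists_codeword (n r : ℕ) (hr : 0 < r) (hdvd : r ∣ n)
    (L : Fin (n / r) → Fin (n / r) → Finset (Fin n))
    (hcell : ∀ i j, (L i j).card = r)
    (hrow : ∀ i : Fin (n / r), ∀ x : Fin n, ∃! j, x ∈ L i j)
    (i : Fin (n / r)) :
    ∃ π : Equiv.Perm (Fin n), ∀ j : Fin (n / r), part n r π (j : ℕ) = L i j := by
  have hm : ∀ p : Fin n, (p : ℕ) / r < n / r :=
    fun p => Nat.div_lt_div_of_lt_of_dvd hdvd p.isLt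
  set f : Fin n → Fin n := fun p =>
    ((L i ⟨(p : ℕ) / r, hm p⟩).orderIsoOfFin (hcell i _)
      ⟨(p : ℕ) % r, Nat.mod_lt _ hr⟩ : {x // x ∈ L i ⟨(p : ℕ) / r, hm p⟩}).1 with hf
  have hmem : ∀ p : Fin n, f p ∈ L i ⟨(p : ℕ) / r, hm p⟩ :=
    fun p => ((L i _).orderIsoOfFin _ _).2
  have hinj : Function.Injective f := by
    intro p q hpq
    obtain ⟨j₀, -, hu⟩ := hrow i (f p)
    have h1 : (⟨(p : ℕ) / r, hm p⟩ : Fin (n / r)) = j₀ := hu _ (hmem p)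
    have h2 : (⟨(q : ℕ) / r, hm q⟩ : Fin (n / r)) = j₀ := hu _ (hpq ▸ hmem q)
    have hjj : (⟨(p : ℕ) / r, hm p⟩ : Fin (n / r)) = ⟨(q : ℕ) / r, hm q⟩ :=
      h1.trans h2.symm
    have hdiv : (p : ℕ) / r = (q : ℕ) / r := by simpa using congrArg Fin.val hjj
    rw [hf] at hpq
    simp only at hpq
    rw [hjj] at hpq
    have := (OrderIso.injective _ (Subtype.coe_injective hpq))
    have hmod : (p : ℕ) % r = (q : ℕ) % r := by simpa using congrArg Fin.val this
    have : (p : ℕ) = (q : ℕ) := by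
      have hp := Nat.div_add_mod (p : ℕ) r
      have hq := Nat.div_add_mod (q : ℕ) r
      rw [hdiv, hmod] at hp
      exact hp.symm.trans hq
    exact Fin.ext this
  have hbij := Finite.injective_iff_bijective.mp hinj
  refine ⟨Equiv.ofBijective f hbij, ?_⟩
  set π := Equiv.ofBijective f hbij with hπ
  have hx : ∀ x : Fin n, x ∈ L i ⟨((π.symm x : Fin n) : ℕ) / r, hm _⟩ := by
    intro x
    have h := hmem (π.symm x)
    have : f (π.symm x) = x := π.apply_symm_apply x
    rwa [this] at h
  intro j
  ext x
  rw [mem_part_iff]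
  constructor
  · intro h
    have : (⟨((π.symm x : Fin n) : ℕ) / r, hm _⟩ : Fin (n / r)) = j := by
      apply Fin.ext; exact h
    rw [← this]; exact hx x
  · intro h
    obtain ⟨j₀, -, hu⟩ := hrow i x
    have h1 := hu _ h
    have h2 := hu _ (hx x)
    have : j = (⟨((π.symm x : Fin n) : ℕ) / r, hm _⟩ : Fin (n / r)) := h1.trans h2.symm
    rw [this]
    rfl

/-- The rows of a semi-Latin square with parameters `n` and `r`, viewed as ordered set
partitions of `[n]`, have pairwise disjoint parts in the same column position of
distinct rows; consequently they form an `r`-regular multipermutation code of length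
`n` with minimum `r`-regular Ulam distance at least `r` and cardinality `n/r`. -/
theorem semiLatin_code (n r : ℕ) (hn : 0 < n) (hr : 0 < r) (hdvd : r ∣ n)
    (L : Fin (n / r) → Fin (n / r) → Finset (Fin n))
    (hcell : ∀ i j, (L i j).card = r)
    (hrow : ∀ i : Fin (n / r), ∀ x : Fin n, ∃! j, x ∈ L i j)
    (hcol : ∀ j : Fin (n / r), ∀ x : Fin n, ∃! i, x ∈ L i j) :
    (∀ i i' j : Fin (n / r), i ≠ i' → Disjoint (L i j) (L i' j)) ∧
    (∀ π ∈ slsCode n r L, ∀ σ ∈ slsCode n r L,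
      mp n r π ≠ mp n r σ → r ≤ ulamR n r π σ) ∧
    Nat.card {f : Fin n → ℕ // ∃ π ∈ slsCode n r L, mp n r π = f} = n / r := by
  have hrn : r ≤ n := Nat.le_of_dvd hn hdvd
  have hdisj : ∀ i i' j : Fin (n / r), i ≠ i' → Disjoint (L i j) (L i' j) := by
    intro i i' j hne
    rw [Finset.disjoint_left]
    intro x hx hx'
    obtain ⟨i₀, -, hu⟩ := hcol j x
    exact hne ((hu i hx).trans (hu i' hx').symm)
  have hmprow : ∀ (π : Equiv.Perm (Fin n)) (i : Fin (n / r)),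
      (∀ j : Fin (n / r), part n r π (j : ℕ) = L i j) →
      ∀ x, x ∈ L i ⟨mp n r π x, mp_lt n r hdvd π x⟩ := by
    intro π i hπi x
    have h1 : x ∈ part n r π (mp n r π x) := (mem_part_iff _ _ _ _ _).2 rfl
    have h3 : part n r π (mp n r π x) = L i ⟨_, mp_lt n r hdvd π x⟩ :=
      hπi ⟨_, mp_lt n r hdvd π x⟩
    rwa [h3] at h1
  have hmp_eq : ∀ (π σ : Equiv.Perm (Fin n)) (i : Fin (n / r)),
      (∀ j : Fin (n / r), part n r π (j : ℕ) = L i j) →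
      (∀ j : Fin (n / r), part n r σ (j : ℕ) = L i j) →
      mp n r π = mp n r σ := by
    intro π σ i hπi hσi
    funext x
    obtain ⟨j₀, -, hu⟩ := hrow i x
    have h := (hu _ (hmprow π i hπi x)).trans (hu _ (hmprow σ i hσi x)).symm
    exact congrArg Fin.val h
  refine ⟨hdisj, ?_, ?_⟩
  · rintro π ⟨i, hπi⟩ σ ⟨i', hσi⟩ hne
    have hii : i ≠ i' := fun h => hne (hmp_eq π σ i hπi (h ▸ hσi))
    have hptw : ∀ x, mp n r π x ≠ mp n r σ x := by
      intro x heq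
      have h1 := hmprow π i hπi x
      have h2 := hmprow σ i' hσi x
      have h2' : x ∈ L i' ⟨mp n r π x, mp_lt n r hdvd π x⟩ := by
        have : (⟨mp n r σ x, mp_lt n r hdvd σ x⟩ : Fin (n / r)) =
            ⟨mp n r π x, mp_lt n r hdvd π x⟩ := Fin.ext heq.symm
        rwa [this] at h2
      exact Finset.disjoint_left.mp (hdisj i i' _ hii) h1 h2'
    unfold ulamR
    apply le_csInf
    · exact ⟨ulam n π σ, π, σ, rfl, rfl, rfl⟩
    rintro k ⟨π', σ', hπ', hσ', rfl⟩
    have h' : ∀ x, mp n r π' x ≠ mp n r σ' x := fun x => by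
      rw [show mp n r π' x = mp n r π x from congrFun hπ' x,
          show mp n r σ' x = mp n r σ x from congrFun hσ' x]
      exact hptw x
    have hb := lcsLen_le n r hr hrn π' σ' h'
    show r ≤ n - lcsLen _ _
    omega
  · set g : Fin (n / r) → (Fin n → ℕ) := fun i =>
      mp n r (Classical.choose (exists_codeword n r hr hdvd L hcell hrow i)) with hg
    have hgspec : ∀ i : Fin (n / r), ∀ j : Fin (n / r),
        part n r (Classical.choose (exists_codeword n r hr hdvd L hcell hrow i)) (j : ℕ)
          = L i j := fun i => Classical.choose_spec (exists_codeword n r hr hdvd L hcell hrow i)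
    have hset : {f : Fin n → ℕ | ∃ π ∈ slsCode n r L, mp n r π = f} = Set.range g := by
      ext f
      constructor
      · rintro ⟨π, ⟨i, hπi⟩, rfl⟩
        exact ⟨i, hmp_eq _ _ i (hgspec i) hπi⟩
      · rintro ⟨i, rfl⟩
        exact ⟨_, ⟨i, hgspec i⟩, rfl⟩
    have hginj : Function.Injective g := by
      intro i i' hgi
      by_contra hne
      have hm0 : 0 < n / r := Nat.div_pos hrn hr
      set j : Fin (n / r) := ⟨0, hm0⟩ with hj
      simp only [hg] at hgi
      have hLL : L i j = L i' j := by
        rw [← hgspec i j, ← hgspec i' j]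
        exact congrArg (fun f => Finset.univ.filter fun x => f x = (j : ℕ)) hgi
      obtain ⟨x, hxm⟩ := Finset.card_pos.mp (by rw [hcell i j]; exact hr)
      exact Finset.disjoint_left.mp (hdisj i i' j hne) hxm (hLL ▸ hxm)
    calc Nat.card {f : Fin n → ℕ // ∃ π ∈ slsCode n r L, mp n r π = f}
        = Nat.card ↑(Set.range g) := by rw [← hset]; rfl
      _ = Nat.card (Fin (n / r)) := Nat.card_range_of_injective hginj
      _ = n / r := by simp
end

section
/- Construction from resolvable Steiner systems: if a resolvable Steiner system S(k,r,n) exists, then for every odd d with d ≤ r − k + 1 there exists an r-regular multipermutation code of length n with minimum r-regular Ulam distance at least d and cardinality (C(n-1,k-1)/C(r-1,k-1)) · (n/r)!. -/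
/-- The multipermutation code obtained from a resolution `cls` of a Steiner system:
codewords are all orderings of the partitions given by the resolution classes. -/
def steinerCode (n r m : ℕ) (cls : Fin m → Fin (n / r) → Finset (Fin n)) :
    Set (Equiv.Perm (Fin n)) :=
  {π | ∃ (i : Fin m) (g : Equiv.Perm (Fin (n / r))),
      ∀ j : Fin (n / r), part n r π (j : ℕ) = cls i (g j)}

namespace SteinerAux

lemma mp_lt {n r q : ℕ} (hr : 0 < r) (hn : n = q * r) (π : Equiv.Perm (Fin n)) (x : Fin n) :
    mp n r π x < q := by
  have h := (π.symm x).isLt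
  have h2 : (π.symm x : ℕ) < q * r := by omega
  exact (Nat.div_lt_iff_lt_mul hr).2 h2

lemma mem_part (n r : ℕ) (π : Equiv.Perm (Fin n)) (x : Fin n) :
    x ∈ part n r π (mp n r π x) := by simp [part]

lemma mem_part_iff {n r i : ℕ} {π : Equiv.Perm (Fin n)} {x : Fin n} :
    x ∈ part n r π i ↔ mp n r π x = i := by simp [part]

lemma part_congr {n r : ℕ} {π σ : Equiv.Perm (Fin n)} (h : mp n r π = mp n r σ) (i : ℕ) :
    part n r π i = part n r σ i := by simp [part, h]

lemma mp_eq_of_parts {n r q : ℕ} (hr : 0 < r) (hn : n = q * r) {π σ : Equiv.Perm (Fin n)}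
    (h : ∀ j : Fin q, part n r π (j : ℕ) = part n r σ (j : ℕ)) : mp n r π = mp n r σ := by
  funext x
  have h1 : x ∈ part n r π (mp n r π x) := mem_part _ _ _ _
  have hx : mp n r π x < q := mp_lt hr hn π x
  have h2 := h ⟨mp n r π x, hx⟩
  rw [show ((⟨mp n r π x, hx⟩ : Fin q) : ℕ) = mp n r π x from rfl] at h2
  rw [h2] at h1
  exact (mem_part_iff.1 h1).symm

/-- Fiberwise counting: if one fiber of `a` over `range q` is small and the rest are ≤ r. -/
lemma fiber_sum_bound {α : Type*} [DecidableEq α] (s : Finset α) (a : α → ℕ) (q r k : ℕ)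
    (ha : ∀ x ∈ s, a x < q)
    (hrow : ∀ i, (s.filter fun x => a x = i).card ≤ r)
    (hsmall : ∃ i < q, (s.filter fun x => a x = i).card ≤ k - 1) :
    s.card ≤ (q - 1) * r + (k - 1) := by
  obtain ⟨i0, hi0q, hi0⟩ := hsmall
  have hcard : s.card = ∑ i ∈ Finset.range q, (s.filter fun x => a x = i).card :=
    Finset.card_eq_sum_card_fiberwise fun x hx => Finset.mem_range.2 (ha x hx)
  rw [hcard, ← Finset.add_sum_erase (Finset.range q) (fun i => (s.filter fun x => a x = i).card)
    (Finset.mem_range.2 hi0q)]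
  have h2 : ∑ i ∈ (Finset.range q).erase i0, (s.filter fun x => a x = i).card ≤ (q - 1) * r := by
    calc ∑ i ∈ (Finset.range q).erase i0, (s.filter fun x => a x = i).card
        ≤ ((Finset.range q).erase i0).card • r :=
          Finset.sum_le_card_nsmul _ _ r fun i _ => hrow i
      _ = (q - 1) * r := by
          rw [Finset.card_erase_of_mem (Finset.mem_range.2 hi0q), Finset.card_range, smul_eq_mul]
  omega

/-- If all fibers (pairs) are ≤ k-1 and the support pairs form a chain, some row is small. -/
lemma exists_small_row {α : Type*} [DecidableEq α] (s : Finset α) (a b : α → ℕ) (q k : ℕ)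
    (hq : 0 < q)
    (ha : ∀ x ∈ s, a x < q) (hb : ∀ x ∈ s, b x < q)
    (hchain : ∀ x ∈ s, ∀ y ∈ s, (a x ≤ a y ∧ b x ≤ b y) ∨ (a y ≤ a x ∧ b y ≤ b x))
    (hfiber : ∀ x ∈ s, (s.filter fun y => a y = a x ∧ b y = b x).card ≤ k - 1) :
    ∃ i < q, (s.filter fun x => a x = i).card ≤ k - 1 := by
  by_contra hcon
  push_neg at hcon
  set T := s.image (fun x => (a x, b x)) with hT
  have hTsum : ∀ p ∈ T, ∀ p' ∈ T, p.1 + p.2 = p'.1 + p'.2 → p = p' := by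
    intro p hp p' hp' hsum
    obtain ⟨x, hx, rfl⟩ := Finset.mem_image.1 hp
    obtain ⟨y, hy, rfl⟩ := Finset.mem_image.1 hp'
    rcases hchain x hx y hy with ⟨h1, h2⟩ | ⟨h1, h2⟩ <;>
      · simp only [Prod.mk.injEq] at hsum ⊢
        omega
  have hTcard : T.card ≤ 2 * q - 1 := by
    have h1 : T.card = (T.image fun p => p.1 + p.2).card := by
      rw [Finset.card_image_of_injOn fun p hp p' hp' h => hTsum p hp p' hp' h]
    rw [h1]
    refine (Finset.card_le_card ?_).trans_eq (Finset.card_range (2 * q - 1))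
    intro v hv
    obtain ⟨p, hp, rfl⟩ := Finset.mem_image.1 hv
    obtain ⟨x, hx, rfl⟩ := Finset.mem_image.1 hp
    have := ha x hx; have := hb x hx
    exact Finset.mem_range.2 (by omega)
  have hTrow : ∀ i < q, 2 ≤ (T.filter fun p => p.1 = i).card := by
    intro i hi
    have hrow := hcon i hi
    have hpos : 0 < (s.filter fun x => a x = i).card := lt_of_le_of_lt (Nat.zero_le _) hrow
    obtain ⟨x, hxmem⟩ := Finset.card_pos.1 hpos
    rw [Finset.mem_filter] at hxmem
    by_contra hle
    push_neg at hle
    have hx' : (a x, b x) ∈ T.filter fun p => p.1 = i := by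
      refine Finset.mem_filter.2 ⟨Finset.mem_image.2 ⟨x, hxmem.1, rfl⟩, hxmem.2⟩
    have hone : (T.filter fun p => p.1 = i).card ≤ 1 := by omega
    have hsingle : ∀ y ∈ s, a y = i → (a y = a x ∧ b y = b x) := by
      intro y hy hay
      have hy' : (a y, b y) ∈ T.filter fun p => p.1 = i :=
        Finset.mem_filter.2 ⟨Finset.mem_image.2 ⟨y, hy, rfl⟩, hay⟩
      have heq := Finset.card_le_one.1 hone _ hy' _ hx'
      rw [Prod.mk.injEq] at heq
      exact heq
    have hsub : (s.filter fun y => a y = i) ⊆ s.filter fun y => a y = a x ∧ b y = b x := by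
      intro y hy
      rw [Finset.mem_filter] at hy ⊢
      exact ⟨hy.1, hsingle y hy.1 hy.2⟩
    have hc1 := Finset.card_le_card hsub
    have hc2 := hfiber x hxmem.1
    omega
  have hTeq : T.card = ∑ i ∈ Finset.range q, (T.filter fun p => p.1 = i).card := by
    refine Finset.card_eq_sum_card_fiberwise fun p hp => ?_
    obtain ⟨x, hx, rfl⟩ := Finset.mem_image.1 hp
    exact Finset.mem_range.2 (ha x hx)
  have h2q : 2 * q ≤ T.card := by
    rw [hTeq]
    calc 2 * q = ∑ _i ∈ Finset.range q, 2 := by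
          rw [Finset.sum_const, Finset.card_range, smul_eq_mul]; ring
      _ ≤ _ := Finset.sum_le_sum fun i hi => hTrow i (Finset.mem_range.1 hi)
  omega

lemma chain_of_sublist {n r : ℕ} (π σ : Equiv.Perm (Fin n)) (l : List (Fin n))
    (h1 : l.Sublist (List.ofFn π)) (h2 : l.Sublist (List.ofFn σ)) :
    ∀ x ∈ l, ∀ y ∈ l,
      (mp n r π x ≤ mp n r π y ∧ mp n r σ x ≤ mp n r σ y) ∨
      (mp n r π y ≤ mp n r π x ∧ mp n r σ y ≤ mp n r σ x) := by
  have hofn : ∀ (τ : Equiv.Perm (Fin n)),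
      (List.ofFn τ).Pairwise fun x y => mp n r τ x ≤ mp n r τ y := by
    intro τ
    refine List.pairwise_ofFn.2 fun i j hij => ?_
    simp only [mp, Equiv.symm_apply_apply]
    exact Nat.div_le_div_right (by exact_mod_cast hij.le)
  have hp1 := (hofn π).sublist h1
  have hp2 := (hofn σ).sublist h2
  have hp := hp1.and hp2
  intro x hx y hy
  rcases eq_or_ne x y with rfl | hne
  · exact Or.inl ⟨le_refl _, le_refl _⟩
  · have hS : l.Pairwise fun u v =>
        (mp n r π u ≤ mp n r π v ∧ mp n r σ u ≤ mp n r σ v) ∨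
        (mp n r π v ≤ mp n r π u ∧ mp n r σ v ≤ mp n r σ u) := hp.imp fun h => Or.inl h
    letI : Std.Symm (fun u v : Fin n =>
        (mp n r π u ≤ mp n r π v ∧ mp n r σ u ≤ mp n r σ v) ∨
        (mp n r π v ≤ mp n r π u ∧ mp n r σ v ≤ mp n r σ u)) := ⟨fun a b h => h.symm⟩
    exact hS.forall hx hy hne

end SteinerAux

/-- Construction from resolvable Steiner systems: if a resolvable Steiner system
`S(k,r,n)` exists (with its `m = C(n-1,k-1)/C(r-1,k-1)` resolution classes given by
`cls`), then for every odd `d ≤ r − k + 1` the code consisting of all orderings of the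
resolution classes is an `r`-regular multipermutation code of length `n` with minimum
`r`-regular Ulam distance at least `d` and cardinality `m·(n/r)!`. -/


theorem steiner_code (n r k d m : ℕ) (hn : 0 < n) (hr : 0 < r) (hk : 0 < k)
    (hkr : k ≤ r) (hdvd : r ∣ n) (hodd : Odd d) (hd : d ≤ r - k + 1)
    (hm : m = Nat.choose (n - 1) (k - 1) / Nat.choose (r - 1) (k - 1))
    (cls : Fin m → Fin (n / r) → Finset (Fin n))
    (hcard : ∀ i j, (cls i j).card = r)
    (hpart : ∀ i : Fin m, ∀ x : Fin n, ∃! j, x ∈ cls i j)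
    (hsteiner : ∀ K : Finset (Fin n), K.card = k →
      ∃! p : Fin m × Fin (n / r), K ⊆ cls p.1 p.2) :
    (∀ π ∈ steinerCode n r m cls, ∀ σ ∈ steinerCode n r m cls,
      mp n r π ≠ mp n r σ → d ≤ ulamR n r π σ) ∧
    Nat.card {f : Fin n → ℕ // ∃ π ∈ steinerCode n r m cls, mp n r π = f} =
      m * Nat.factorial (n / r) := by
  classical
  have hrn : r ≤ n := Nat.le_of_dvd hn hdvd
  have hq : 0 < (n / r) := Nat.div_pos hrn hr
  have hn' : n = (n / r) * r := (Nat.div_mul_cancel hdvd).symm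
  -- two blocks containing a common k-set coincide (as indexed pairs)
  have hB : ∀ (p p' : Fin m × Fin (n / r)) (K : Finset (Fin n)), K.card = k →
      K ⊆ cls p.1 p.2 → K ⊆ cls p'.1 p'.2 → p = p' := by
    intro p p' K hK h1 h2
    obtain ⟨p0, _, hu⟩ := hsteiner K hK
    rw [hu p h1, hu p' h2]
  have hint : ∀ (p p' : Fin m × Fin (n / r)), p ≠ p' →
      ((cls p.1 p.2) ∩ (cls p'.1 p'.2)).card ≤ k - 1 := by
    intro p p' hne
    by_contra hc
    push_neg at hc
    have hkle : k ≤ ((cls p.1 p.2) ∩ (cls p'.1 p'.2)).card := by omega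
    obtain ⟨K, hKsub, hKcard⟩ := Finset.exists_subset_card_eq hkle
    exact hne (hB p p' K hKcard (hKsub.trans Finset.inter_subset_left)
      (hKsub.trans Finset.inter_subset_right))
  -- block of an element in a given class
  choose blk hblk using fun (c : Fin m) (x : Fin n) => (hpart c x).exists
  have hblk_eq : ∀ c x j, x ∈ cls c j → blk c x = j :=
    fun c x j hj => (hpart c x).unique (hblk c x) hj
  -- construction of a codeword realizing a given ordering of a class
  have hbuild : ∀ (c : Fin m) (g : Equiv.Perm (Fin (n / r))), ∃ π : Equiv.Perm (Fin n),
      ∀ j : Fin (n / r), part n r π (j : ℕ) = cls c (g j) := by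
    intro c g
    set idx : Fin n → ℕ := fun x => ((cls c (blk c x)).filter fun z => z < x).card with hidx
    have hidxlt : ∀ x, idx x < r := by
      intro x
      have hss : ((cls c (blk c x)).filter fun z => z < x) ⊂ cls c (blk c x) := by
        refine (Finset.ssubset_iff_of_subset (Finset.filter_subset _ _)).2 ⟨x, hblk c x, by simp⟩
      have := Finset.card_lt_card hss
      rwa [hcard c (blk c x)] at this
    have hmono : ∀ x y : Fin n, blk c x = blk c y → x < y → idx x < idx y := by
      intro x y hbe hxy
      show ((cls c (blk c x)).filter fun z => z < x).card <
        ((cls c (blk c y)).filter fun z => z < y).card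
      rw [hbe]
      refine Finset.card_lt_card ?_
      rw [Finset.ssubset_iff_of_subset]
      · exact ⟨x, Finset.mem_filter.2 ⟨hbe ▸ hblk c x, hxy⟩, by simp⟩
      · intro z hz
        rw [Finset.mem_filter] at hz ⊢
        exact ⟨hz.1, hz.2.trans hxy⟩
    have hFb : ∀ x : Fin n, (g.symm (blk c x) : ℕ) * r + idx x < n := by
      intro x
      have h1 : (g.symm (blk c x) : ℕ) < (n / r) := (g.symm (blk c x)).isLt
      calc (g.symm (blk c x) : ℕ) * r + idx x < ((g.symm (blk c x) : ℕ) + 1) * r := by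
            have := hidxlt x; ring_nf; omega
        _ ≤ (n / r) * r := Nat.mul_le_mul_right r (by omega)
        _ = n := hn'.symm
    set F : Fin n → Fin n := fun x => ⟨(g.symm (blk c x) : ℕ) * r + idx x, hFb x⟩ with hF
    have hdiv : ∀ x, ((g.symm (blk c x) : ℕ) * r + idx x) / r = (g.symm (blk c x) : ℕ) := by
      intro x
      rw [mul_comm, Nat.mul_add_div hr, Nat.div_eq_of_lt (hidxlt x), add_zero]
    have hFinj : Function.Injective F := by
      intro x y hxy
      have hval : (g.symm (blk c x) : ℕ) * r + idx x = (g.symm (blk c y) : ℕ) * r + idx y :=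
        congrArg Fin.val hxy
      have hj : (g.symm (blk c x) : ℕ) = (g.symm (blk c y) : ℕ) := by
        have h1 := hdiv x
        have h2 := hdiv y
        rw [hval] at h1
        exact h1.symm.trans h2
      have hbe : blk c x = blk c y := g.symm.injective (Fin.val_injective hj)
      have hi : idx x = idx y := by
        rw [hj] at hval
        exact Nat.add_left_cancel hval
      by_contra hne
      rcases lt_trichotomy x y with h | h | h
      · exact absurd hi (Nat.ne_of_lt (hmono x y hbe h))
      · exact hne h
      · exact absurd hi.symm (Nat.ne_of_lt (hmono y x hbe.symm h))
    have hFbij := Finite.injective_iff_bijective.1 hFinj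
    refine ⟨(Equiv.ofBijective F hFbij).symm, ?_⟩
    have hmp : ∀ x, mp n r (Equiv.ofBijective F hFbij).symm x = (g.symm (blk c x) : ℕ) :=
      fun x => hdiv x
    intro j
    ext x
    simp only [SteinerAux.mem_part_iff, hmp x]
    constructor
    · intro hjx
      have h1 : g.symm (blk c x) = j := Fin.val_injective hjx
      have h2 : blk c x = g j := by rw [← h1, Equiv.apply_symm_apply]
      exact h2 ▸ hblk c x
    · intro hxj
      rw [hblk_eq c x (g j) hxj, Equiv.symm_apply_apply]
  constructor
  · -- minimum distance
    rintro π ⟨c1, g1, hp1⟩ σ ⟨c2, g2, hp2⟩ hne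
    refine le_csInf ⟨ulam n π σ, π, σ, rfl, rfl, rfl⟩ ?_
    rintro x ⟨π', σ', hπ', hσ', rfl⟩
    have hparts1 : ∀ j : Fin (n / r), part n r π' (j : ℕ) = cls c1 (g1 j) :=
      fun j => by rw [SteinerAux.part_congr hπ' _, hp1 j]
    have hparts2 : ∀ j : Fin (n / r), part n r σ' (j : ℕ) = cls c2 (g2 j) :=
      fun j => by rw [SteinerAux.part_congr hσ' _, hp2 j]
    have hne' : mp n r π' ≠ mp n r σ' := by rw [hπ', hσ']; exact hne
    have hlen : ∀ l : List (Fin n), l.Sublist (List.ofFn π') → l.Sublist (List.ofFn σ') →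
        l.length ≤ ((n / r) - 1) * r + (k - 1) := by
      intro l h1 h2
      have hnd : l.Nodup := (List.nodup_ofFn.2 π'.injective).sublist h1
      set s := l.toFinset with hs
      have hcardl : s.card = l.length := List.toFinset_card_of_nodup hnd
      have hchain0 := SteinerAux.chain_of_sublist (r := r) π' σ' l h1 h2
      have hchain : ∀ x ∈ s, ∀ y ∈ s,
          (mp n r π' x ≤ mp n r π' y ∧ mp n r σ' x ≤ mp n r σ' y) ∨
          (mp n r π' y ≤ mp n r π' x ∧ mp n r σ' y ≤ mp n r σ' x) :=
        fun x hx y hy => hchain0 x (List.mem_toFinset.1 hx) y (List.mem_toFinset.1 hy)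
      have hrowb : ∀ i, (s.filter fun x => mp n r π' x = i).card ≤ r := by
        intro i
        by_cases hi : i < (n / r)
        · have hsub : (s.filter fun x => mp n r π' x = i) ⊆ cls c1 (g1 ⟨i, hi⟩) := by
            intro x hx
            rw [Finset.mem_filter] at hx
            have hx2 : x ∈ part n r π' i := SteinerAux.mem_part_iff.2 hx.2
            rwa [show i = ((⟨i, hi⟩ : Fin (n / r)) : ℕ) from rfl, hparts1 ⟨i, hi⟩] at hx2
          exact (Finset.card_le_card hsub).trans (le_of_eq (hcard _ _))
        · have hemp : (s.filter fun x => mp n r π' x = i) = ∅ := by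
            ext x
            simp only [Finset.mem_filter, Finset.notMem_empty, iff_false, not_and]
            intro _ hmpx
            exact hi (hmpx ▸ SteinerAux.mp_lt hr hn' π' x)
          simp [hemp]
      rw [← hcardl]
      refine SteinerAux.fiber_sum_bound s (fun x => mp n r π' x) (n / r) r k
        (fun x _ => SteinerAux.mp_lt hr hn' π' x) hrowb ?_
      by_cases hcc : c1 = c2
      · -- same resolution class
        subst hcc
        by_contra hcon
        push_neg at hcon
        refine absurd ?_ hne'
        have hX : ∀ i : Fin (n / r), ∃ x, x ∈ s ∧ mp n r π' x = (i : ℕ) := by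
          intro i
          have hlt := hcon (i : ℕ) i.isLt
          have hpos : 0 < (s.filter fun x => mp n r π' x = (i : ℕ)).card := by omega
          obtain ⟨x, hx⟩ := Finset.card_pos.1 hpos
          rw [Finset.mem_filter] at hx
          exact ⟨x, hx⟩
        choose X hX1 hX2 using hX
        have hkey : ∀ i : Fin (n / r),
            (g1.trans g2.symm) i = ⟨mp n r σ' (X i), SteinerAux.mp_lt hr hn' σ' (X i)⟩ := by
          intro i
          have hx1 : X i ∈ cls c1 (g1 i) := by
            have hm1 : X i ∈ part n r π' (i : ℕ) := SteinerAux.mem_part_iff.2 (hX2 i)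
            rwa [hparts1 i] at hm1
          have hx2 : X i ∈ cls c1 (g2 ⟨mp n r σ' (X i), SteinerAux.mp_lt hr hn' σ' (X i)⟩) := by
            have hm2 : X i ∈ part n r σ' (mp n r σ' (X i)) := SteinerAux.mem_part _ _ _ _
            rwa [show mp n r σ' (X i) =
              ((⟨mp n r σ' (X i), SteinerAux.mp_lt hr hn' σ' (X i)⟩ : Fin (n / r)) : ℕ) from rfl,
              hparts2 _] at hm2
          have heq := (hpart c1 (X i)).unique hx1 hx2
          simp only [Equiv.trans_apply]
          rw [heq, Equiv.symm_apply_apply]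
        have hH : StrictMono ⇑(g1.trans g2.symm) := by
          intro i i' hii'
          rcases hchain (X i) (hX1 i) (X i') (hX1 i') with ⟨hA, hBc⟩ | ⟨hA, hBc⟩
          · have hne2 : (g1.trans g2.symm) i ≠ (g1.trans g2.symm) i' :=
              fun hh => (ne_of_lt hii') ((g1.trans g2.symm).injective hh)
            refine lt_of_le_of_ne ?_ hne2
            rw [hkey i, hkey i']
            exact Fin.mk_le_mk.2 hBc
          · rw [hX2 i, hX2 i'] at hA
            exact absurd hA (not_le.2 (by exact_mod_cast hii'))
        have hid : ⇑(g1.trans g2.symm) = id :=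
          (hH.range_inj strictMono_id).1
            (by rw [Equiv.range_eq_univ, Set.range_id])
        have hgg : ∀ j : Fin (n / r), g1 j = g2 j := by
          intro j
          have hcf := congrFun hid j
          simp only [Equiv.trans_apply, id_eq] at hcf
          have hcf2 := congrArg g2 hcf
          rwa [Equiv.apply_symm_apply] at hcf2
        exact SteinerAux.mp_eq_of_parts hr hn'
          fun j => by rw [hparts1 j, hparts2 j, hgg j]
      · -- different resolution classes
        refine SteinerAux.exists_small_row s (fun x => mp n r π' x) (fun x => mp n r σ' x) (n / r) k hq
          (fun x _ => SteinerAux.mp_lt hr hn' π' x) (fun x _ => SteinerAux.mp_lt hr hn' σ' x)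
          hchain ?_
        intro x hx
        have hsub : (s.filter fun y => mp n r π' y = mp n r π' x ∧ mp n r σ' y = mp n r σ' x) ⊆
            (cls c1 (g1 ⟨mp n r π' x, SteinerAux.mp_lt hr hn' π' x⟩)) ∩
            (cls c2 (g2 ⟨mp n r σ' x, SteinerAux.mp_lt hr hn' σ' x⟩)) := by
          intro y hy
          rw [Finset.mem_filter] at hy
          refine Finset.mem_inter.2 ⟨?_, ?_⟩
          · have hm1 : y ∈ part n r π' (mp n r π' y) := SteinerAux.mem_part _ _ _ _
            rw [hy.2.1] at hm1
            rwa [show mp n r π' x =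
              ((⟨mp n r π' x, SteinerAux.mp_lt hr hn' π' x⟩ : Fin (n / r)) : ℕ) from rfl,
              hparts1 _] at hm1
          · have hm2 : y ∈ part n r σ' (mp n r σ' y) := SteinerAux.mem_part _ _ _ _
            rw [hy.2.2] at hm2
            rwa [show mp n r σ' x =
              ((⟨mp n r σ' x, SteinerAux.mp_lt hr hn' σ' x⟩ : Fin (n / r)) : ℕ) from rfl,
              hparts2 _] at hm2
        refine (Finset.card_le_card hsub).trans
          (hint (c1, g1 ⟨mp n r π' x, SteinerAux.mp_lt hr hn' π' x⟩)
            (c2, g2 ⟨mp n r σ' x, SteinerAux.mp_lt hr hn' σ' x⟩) ?_)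
        intro hpe
        exact hcc (congrArg Prod.fst hpe)
    have hlcs : lcsLen (List.ofFn ⇑π') (List.ofFn ⇑σ') ≤ ((n / r) - 1) * r + (k - 1) := by
      refine csSup_le ⟨0, [], rfl, List.nil_sublist _, List.nil_sublist _⟩ ?_
      rintro b ⟨l, rfl, h1, h2⟩
      exact hlen l h1 h2
    obtain ⟨t, ht⟩ : ∃ t, n / r = t + 1 := ⟨n / r - 1, by omega⟩
    have hlcs' : lcsLen (List.ofFn ⇑π') (List.ofFn ⇑σ') ≤ t * r + (k - 1) := by
      have he : (n / r) - 1 = t := by omega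
      rwa [he] at hlcs
    have hnn : n = t * r + r := by rw [hn', ht]; ring
    show d ≤ ulam n π' σ'
    unfold ulam
    omega
  · -- cardinality
    choose bp hbp using hbuild
    have hto : ∀ p : Fin m × Equiv.Perm (Fin (n / r)),
        ∃ π ∈ steinerCode n r m cls, mp n r π = mp n r (bp p.1 p.2) :=
      fun p => ⟨bp p.1 p.2, ⟨p.1, p.2, hbp p.1 p.2⟩, rfl⟩
    set tof : Fin m × Equiv.Perm (Fin (n / r)) →
        {f : Fin n → ℕ // ∃ π ∈ steinerCode n r m cls, mp n r π = f} :=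
      fun p => ⟨mp n r (bp p.1 p.2), hto p⟩ with htof_def
    have hinj : Function.Injective tof := by
      intro p p' hpp'
      have hmpe : mp n r (bp p.1 p.2) = mp n r (bp p'.1 p'.2) := congrArg Subtype.val hpp'
      have hpj : ∀ j : Fin (n / r), cls p.1 (p.2 j) = cls p'.1 (p'.2 j) := by
        intro j
        rw [← hbp p.1 p.2 j, ← hbp p'.1 p'.2 j]
        exact SteinerAux.part_congr hmpe _
      have hpair : ∀ j : Fin (n / r), (p.1, p.2 j) = (p'.1, p'.2 j) := by
        intro j
        have hkc : k ≤ (cls p.1 (p.2 j)).card := by rw [hcard]; exact hkr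
        obtain ⟨K, hKsub, hKcard⟩ := Finset.exists_subset_card_eq hkc
        exact hB (p.1, p.2 j) (p'.1, p'.2 j) K hKcard hKsub (by rw [← hpj j]; exact hKsub)
      have h1 : p.1 = p'.1 := by
        have hp0 := hpair ⟨0, hq⟩
        rw [Prod.mk.injEq] at hp0
        exact hp0.1
      have h2 : p.2 = p'.2 := by
        refine Equiv.ext fun j => ?_
        have hpj' := hpair j
        rw [Prod.mk.injEq] at hpj'
        exact hpj'.2
      exact Prod.ext_iff.2 ⟨h1, h2⟩
    have hsurj : Function.Surjective tof := by
      rintro ⟨f, π0, ⟨c, g, hparts⟩, hmpf⟩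
      refine ⟨(c, g), Subtype.ext ?_⟩
      show mp n r (bp c g) = f
      rw [← hmpf]
      exact SteinerAux.mp_eq_of_parts hr hn' fun j => by rw [hbp c g j, ← hparts j]
    have e : (Fin m × Equiv.Perm (Fin (n / r))) ≃
        {f : Fin n → ℕ // ∃ π ∈ steinerCode n r m cls, mp n r π = f} :=
      Equiv.ofBijective tof ⟨hinj, hsurj⟩
    rw [Nat.card_congr e.symm]
    simp [Nat.card_eq_fintype_card, Fintype.card_perm]
end
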